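/- arXiv:2508.16960 — 3 statements merged into one kernel-verified Lean document; each statement's English description precedes it below -/
import Mathlib

section
/- There exists a constant C > 0 such that for every T > 0 and all functions f, g on [0,T]×ℝ² which are continuous in t with values in the Schwartz space: (∫₀^T [∫_ℝ (∫_ℝ |f(t,x₁,x₂)g(t,x₁,x₂)|^{18/13} dx₁)^{26/18} dx₂] dt)^{1/2} ≤ C [(∫₀^T ‖f(t)‖⁴_{H¹(ℝ²)} dt)^{1/2} + (∫₀^T ‖g(t)‖⁴_{H¹(ℝ²)} dt)^{1/2}], i.e. ‖fg‖_{L²_T L²_{x₂} L^{18/13}_{x₁}} ≤ C(‖f‖²_{L⁴_T H¹} + ‖g‖²_{L⁴_T H¹}). -/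
open MeasureTheory
open scoped ENNReal NNReal

noncomputable section

/-- Fourier transform on ℝ² (realized as ℝ × ℝ). -/
def FT (f : ℝ × ℝ → ℂ) : ℝ × ℝ → ℂ := fun ξ =>
  ∫ x : ℝ × ℝ,
    Complex.exp (((-(2 * Real.pi * (x.1 * ξ.1 + x.2 * ξ.2)) : ℝ) : ℂ) * Complex.I) * f x

/-- Inverse Fourier transform on ℝ². -/
def FTinv (f : ℝ × ℝ → ℂ) : ℝ × ℝ → ℂ := fun x =>
  ∫ ξ : ℝ × ℝ,
    Complex.exp ((((2 * Real.pi * (x.1 * ξ.1 + x.2 * ξ.2)) : ℝ) : ℂ) * Complex.I) * f ξ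

/-- The linear Zakharov–Kuznetsov group `U(t)φ = F⁻¹(e^{i t ξ₁(ξ₁²+ξ₂²)} Fφ)`. -/
def U (t : ℝ) (φ : ℝ × ℝ → ℂ) : ℝ × ℝ → ℂ :=
  FTinv (fun ξ => Complex.exp (Complex.I * ((t * ξ.1 * (ξ.1 ^ 2 + ξ.2 ^ 2) : ℝ) : ℂ)) * FT φ ξ)

/-- Fractional derivative in the first variable: `D^r_{x₁} f = F⁻¹(|ξ₁|^r F f)`. -/
def Dx1 (r : ℝ) (f : ℝ × ℝ → ℂ) : ℝ × ℝ → ℂ :=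
  FTinv (fun ξ => ((|ξ.1| ^ r : ℝ) : ℂ) * FT f ξ)

/-- Fractional derivative in the second variable: `D^r_{x₂} f = F⁻¹(|ξ₂|^r F f)`. -/
def Dx2 (r : ℝ) (f : ℝ × ℝ → ℂ) : ℝ × ℝ → ℂ :=
  FTinv (fun ξ => ((|ξ.2| ^ r : ℝ) : ℂ) * FT f ξ)

/-- Partial derivative ∂_{x₁}. -/
def pd1 (f : ℝ × ℝ → ℂ) : ℝ × ℝ → ℂ := fun x => fderiv ℝ f x (1, 0)

/-- Partial derivative ∂_{x₂}. -/
def pd2 (f : ℝ × ℝ → ℂ) : ℝ × ℝ → ℂ := fun x => fderiv ℝ f x (0, 1)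

/-- Duhamel integral `∫₀^t U(t-τ) g(τ) dτ`. -/
def Duh (g : ℝ → ℝ × ℝ → ℂ) (t : ℝ) : ℝ × ℝ → ℂ := fun x =>
  ∫ τ in (0:ℝ)..t, U (t - τ) (g τ) x

/-- Sobolev norm `‖f‖_{H^s(ℝ²)}`. -/
def HsNorm (s : ℝ) (f : ℝ × ℝ → ℂ) : ℝ≥0∞ :=
  (∫⁻ ξ : ℝ × ℝ,
      ENNReal.ofReal ((1 + ξ.1 ^ 2 + ξ.2 ^ 2) ^ s) * (‖FT f ξ‖₊ : ℝ≥0∞) ^ (2 : ℝ)) ^ ((1:ℝ)/2)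

/-- The mixed norm `‖f‖_{L^{9/4}_T L^∞_x}`. -/
def L94LinfNorm (T : ℝ) (f : ℝ → ℝ × ℝ → ℂ) : ℝ≥0∞ :=
  (∫⁻ t in Set.Icc (0:ℝ) T, (eLpNorm (f t) ⊤ volume) ^ ((9:ℝ)/4)) ^ ((4:ℝ)/9)

/-- The mixed norm `‖f‖_{L²_{x₁} L^∞_{x₂ T}}` (with genuine suprema). -/
def L2x1LinfNorm (T : ℝ) (f : ℝ → ℝ × ℝ → ℂ) : ℝ≥0∞ :=
  (∫⁻ x₁ : ℝ,
      (⨆ x₂ : ℝ, ⨆ t ∈ Set.Icc (0:ℝ) T, (‖f t (x₁, x₂)‖₊ : ℝ≥0∞)) ^ (2 : ℝ)) ^ ((1:ℝ)/2)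

/-- The mixed norm `‖f‖_{L^∞_{x₁} L²_{x₂ T}}`. -/
def LinfX1L2Norm (T : ℝ) (f : ℝ → ℝ × ℝ → ℂ) : ℝ≥0∞ :=
  ⨆ x₁ : ℝ,
    (∫⁻ x₂ : ℝ, ∫⁻ t in Set.Icc (0:ℝ) T, (‖f t (x₁, x₂)‖₊ : ℝ≥0∞) ^ (2 : ℝ)) ^ ((1:ℝ)/2)

/-- The mixed norm `‖g‖_{L¹_{x₁} L²_{x₂ T}}`. -/
def L1x1L2Norm (T : ℝ) (g : ℝ → ℝ × ℝ → ℂ) : ℝ≥0∞ :=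
  ∫⁻ x₁ : ℝ,
    (∫⁻ x₂ : ℝ, ∫⁻ τ in Set.Icc (0:ℝ) T, (‖g τ (x₁, x₂)‖₊ : ℝ≥0∞) ^ (2 : ℝ)) ^ ((1:ℝ)/2)

/-- The `H¹(ℝ²)` norm `(∫ (|∇h|² + |h|²))^{1/2}`. -/
def H1Norm (h : ℝ × ℝ → ℂ) : ℝ≥0∞ :=
  (∫⁻ x : ℝ × ℝ,
      ((‖pd1 h x‖₊ : ℝ≥0∞) ^ (2:ℝ) + (‖pd2 h x‖₊ : ℝ≥0∞) ^ (2:ℝ) +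
        (‖h x‖₊ : ℝ≥0∞) ^ (2:ℝ))) ^ ((1:ℝ)/2)

lemma abs_le_of_sq (x y : ℝ) (hy : 0 ≤ y) (h : x^2 ≤ y^2) : |x| ≤ y := by
  have := Real.sqrt_le_sqrt h
  rwa [Real.sqrt_sq_eq_abs, Real.sqrt_sq hy] at this

lemma conj22 : Real.HolderConjugate 2 2 := ⟨by norm_num, by norm_num, by norm_num⟩

lemma agmon_line {ψ dψ : ℝ → ℂ} {C : ℝ}
    (hd : ∀ u, HasDerivAt ψ (dψ u) u) (hcd : Continuous dψ)
    (hb : ∀ u, ‖ψ u‖ ≤ C / (1 + u ^ 2)) (hbd : ∀ u, ‖dψ u‖ ≤ C / (1 + u ^ 2)) (s : ℝ) :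
    (‖ψ s‖₊ : ℝ≥0∞) ^ (2:ℝ) ≤
      2 * ((∫⁻ u, (‖ψ u‖₊ : ℝ≥0∞) ^ (2:ℝ)) ^ ((1:ℝ)/2) *
        (∫⁻ u, (‖dψ u‖₊ : ℝ≥0∞) ^ (2:ℝ)) ^ ((1:ℝ)/2)) := by
  have hC : 0 ≤ C := le_trans (norm_nonneg (ψ 0)) (by simpa using hb 0)
  have hdiff : Differentiable ℝ ψ := fun u => (hd u).differentiableAt
  have hcψ : Continuous ψ := hdiff.continuous
  set h : ℝ → ℝ := fun u => (ψ u).re ^ 2 + (ψ u).im ^ 2 with hh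
  set h' : ℝ → ℝ := fun u => 2 * (ψ u).re * (dψ u).re + 2 * (ψ u).im * (dψ u).im with hh'
  have hnorm : ∀ u, h u = ‖ψ u‖ ^ 2 := by
    intro u
    rw [Complex.sq_norm, Complex.normSq_apply]; ring
  have hre : ∀ u, HasDerivAt (fun u => (ψ u).re) ((dψ u).re) u := fun u =>
    (Complex.reCLM.hasFDerivAt.comp_hasDerivAt u (hd u))
  have him : ∀ u, HasDerivAt (fun u => (ψ u).im) ((dψ u).im) u := fun u =>
    (Complex.imCLM.hasFDerivAt.comp_hasDerivAt u (hd u))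
  have hderiv : ∀ u, HasDerivAt h (h' u) u := by
    intro u
    have := ((hre u).pow 2).add ((him u).pow 2)
    have e : h' u = 2 * (ψ u).re ^ 1 * (dψ u).re + 2 * (ψ u).im ^ 1 * (dψ u).im := by
      simp only [hh', pow_one]
    rw [e]
    exact_mod_cast this
  have hcre : Continuous fun u => (ψ u).re := Complex.continuous_re.comp hcψ
  have hcim : Continuous fun u => (ψ u).im := Complex.continuous_im.comp hcψ
  have hch' : Continuous h' := by
    apply Continuous.add
    · exact ((continuous_const.mul hcre).mul (Complex.continuous_re.comp hcd))
    · exact ((continuous_const.mul hcim).mul (Complex.continuous_im.comp hcd))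
  have hptw : ∀ u, |h' u| ≤ 2 * (‖ψ u‖ * ‖dψ u‖) := by
    intro u
    apply abs_le_of_sq _ _ (by positivity)
    have ha : ‖ψ u‖ ^ 2 = (ψ u).re ^ 2 + (ψ u).im ^ 2 := by
      rw [Complex.sq_norm, Complex.normSq_apply]; ring
    have hb2 : ‖dψ u‖ ^ 2 = (dψ u).re ^ 2 + (dψ u).im ^ 2 := by
      rw [Complex.sq_norm, Complex.normSq_apply]; ring
    have key : ((ψ u).re * (dψ u).re + (ψ u).im * (dψ u).im) ^ 2 ≤
        (‖ψ u‖ * ‖dψ u‖) ^ 2 := by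
      rw [mul_pow, ha, hb2]
      nlinarith [sq_nonneg ((ψ u).re * (dψ u).im - (ψ u).im * (dψ u).re)]
    calc h' u ^ 2 = 4 * ((ψ u).re * (dψ u).re + (ψ u).im * (dψ u).im) ^ 2 := by
          simp only [hh']; ring
      _ ≤ 4 * (‖ψ u‖ * ‖dψ u‖) ^ 2 := by linarith
      _ = (2 * (‖ψ u‖ * ‖dψ u‖)) ^ 2 := by ring
  -- integrable bounds
  have hbound : ∀ u : ℝ, 2 * (‖ψ u‖ * ‖dψ u‖) ≤ 2 * C * C * (1 + u ^ 2)⁻¹ := by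
    intro u
    have h1 : ‖ψ u‖ ≤ C / (1 + u ^ 2) := hb u
    have h2 : ‖dψ u‖ ≤ C := (hbd u).trans (by
      rw [div_le_iff₀ (by positivity)]
      nlinarith [sq_nonneg u])
    have hp : (0:ℝ) < 1 + u ^ 2 := by positivity
    calc 2 * (‖ψ u‖ * ‖dψ u‖) ≤ 2 * ((C / (1 + u^2)) * C) := by
          apply mul_le_mul_of_nonneg_left _ (by norm_num)
          exact mul_le_mul h1 h2 (norm_nonneg _) (by positivity)
      _ = 2 * C * C * (1 + u ^ 2)⁻¹ := by field_simp
  have hintbound : Integrable (fun u : ℝ => 2 * C * C * (1 + u ^ 2)⁻¹) :=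
    integrable_inv_one_add_sq.const_mul _
  have hint2 : Integrable (fun u : ℝ => 2 * (‖ψ u‖ * ‖dψ u‖)) := by
    apply hintbound.mono' ((continuous_const.mul ((hcψ.norm).mul (hcd.norm))).aestronglyMeasurable)
    filter_upwards with u
    show ‖2 * (‖ψ u‖ * ‖dψ u‖)‖ ≤ _
    rw [Real.norm_eq_abs, abs_of_nonneg (by positivity : (0:ℝ) ≤ 2 * (‖ψ u‖ * ‖dψ u‖))]
    exact hbound u
  have hinth' : Integrable h' := by
    apply hintbound.mono' hch'.aestronglyMeasurable
    filter_upwards with u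
    rw [Real.norm_eq_abs]
    exact (hptw u).trans (hbound u)
  -- tendsto 0
  have htend0 : Filter.Tendsto (fun u : ℝ => C / (1 + u ^ 2)) Filter.atTop (nhds 0) := by
    apply Filter.Tendsto.div_atTop tendsto_const_nhds
    exact Filter.tendsto_atTop_add_const_left _ _ (Filter.tendsto_pow_atTop two_ne_zero)
  have htψ : Filter.Tendsto (fun u => ‖ψ u‖) Filter.atTop (nhds 0) :=
    squeeze_zero (fun u => norm_nonneg _) hb htend0
  have htendh : Filter.Tendsto h Filter.atTop (nhds 0) := by
    have := htψ.pow 2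
    simp only [ne_eq, OfNat.ofNat_ne_zero, not_false_eq_true, zero_pow] at this
    refine this.congr fun u => (hnorm u).symm
  -- FTC
  have hFTC := integral_Ioi_of_hasDerivAt_of_tendsto
    (hcψ.continuousWithinAt.norm.pow 2 |>.congr (fun u _ => hnorm u) (hnorm s) : ContinuousWithinAt h (Set.Ici s) s)
    (fun x _ => hderiv x) hinth'.integrableOn htendh
  have hs_le : h s ≤ ∫ u, 2 * (‖ψ u‖ * ‖dψ u‖) := by
    have h1 : h s = ∫ u in Set.Ioi s, (-h' u) := by
      rw [integral_neg, hFTC]; ring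
    have h2 : ∫ u in Set.Ioi s, (-h' u) ≤ ∫ u in Set.Ioi s, 2 * (‖ψ u‖ * ‖dψ u‖) := by
      apply integral_mono hinth'.neg.integrableOn hint2.integrableOn
      intro u
      exact (neg_le_abs _).trans (hptw u)
    have h3 : ∫ u in Set.Ioi s, 2 * (‖ψ u‖ * ‖dψ u‖) ≤ ∫ u, 2 * (‖ψ u‖ * ‖dψ u‖) :=
      setIntegral_le_integral hint2 (by filter_upwards with u; positivity)
    linarith
  -- pass to lintegral
  have hL : (‖ψ s‖₊ : ℝ≥0∞) ^ (2:ℝ) = ENNReal.ofReal (h s) := by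
    rw [hnorm, ← Real.rpow_natCast ‖ψ s‖ 2,
      ← ENNReal.ofReal_rpow_of_nonneg (norm_nonneg _) (by norm_num),
      ← coe_nnnorm, ENNReal.ofReal_coe_nnreal]
    norm_num
  rw [hL]
  calc ENNReal.ofReal (h s) ≤ ENNReal.ofReal (∫ u, 2 * (‖ψ u‖ * ‖dψ u‖)) :=
        ENNReal.ofReal_le_ofReal hs_le
    _ = ∫⁻ u, ENNReal.ofReal (2 * (‖ψ u‖ * ‖dψ u‖)) :=
        ofReal_integral_eq_lintegral_ofReal hint2 (by filter_upwards with u; positivity)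
    _ = ∫⁻ u, 2 * ((‖ψ u‖₊ : ℝ≥0∞) * (‖dψ u‖₊ : ℝ≥0∞)) := by
        apply lintegral_congr; intro u
        rw [ENNReal.ofReal_mul (by norm_num), ENNReal.ofReal_mul (norm_nonneg _),
          ← coe_nnnorm, ← coe_nnnorm, ENNReal.ofReal_coe_nnreal, ENNReal.ofReal_coe_nnreal]
        norm_num
    _ = 2 * ∫⁻ u, (‖ψ u‖₊ : ℝ≥0∞) * (‖dψ u‖₊ : ℝ≥0∞) := by
        rw [lintegral_const_mul]
        exact (measurable_coe_nnreal_ennreal.comp hcψ.nnnorm.measurable).mul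
          (measurable_coe_nnreal_ennreal.comp hcd.nnnorm.measurable)
    _ ≤ 2 * ((∫⁻ u, (‖ψ u‖₊ : ℝ≥0∞) ^ (2:ℝ)) ^ ((1:ℝ)/2) *
        (∫⁻ u, (‖dψ u‖₊ : ℝ≥0∞) ^ (2:ℝ)) ^ ((1:ℝ)/2)) := by
        refine mul_le_mul_right ?_ 2
        exact ENNReal.lintegral_mul_le_Lp_mul_Lq volume conj22
          ((measurable_coe_nnreal_ennreal.comp hcψ.nnnorm.measurable).aemeasurable)
          ((measurable_coe_nnreal_ennreal.comp hcd.nnnorm.measurable).aemeasurable)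

abbrev SM := SchwartzMap (ℝ × ℝ) ℂ

def D1 (φ : SM) : SM := LineDeriv.lineDerivOpCLM ℝ SM ((1:ℝ), (0:ℝ)) φ
def D2 (φ : SM) : SM := LineDeriv.lineDerivOpCLM ℝ SM ((0:ℝ), (1:ℝ)) φ

lemma pd1_eq (φ : SM) : pd1 ⇑φ = ⇑(D1 φ) := rfl
lemma pd2_eq (φ : SM) : pd2 ⇑φ = ⇑(D2 φ) := rfl

lemma schwartz_decay' (φ : SM) :
    ∃ C : ℝ, 0 ≤ C ∧ (∀ x : ℝ × ℝ, ‖φ x‖ ≤ C / (1 + x.1 ^ 2)) ∧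
      (∀ x : ℝ × ℝ, ‖φ x‖ ≤ C / (1 + x.2 ^ 2)) := by
  obtain ⟨C0, hC0pos, hC0⟩ := φ.decay 0 0
  obtain ⟨C2, hC2pos, hC2⟩ := φ.decay 2 0
  have key : ∀ x : ℝ × ℝ, ‖φ x‖ ≤ C0 ∧ ‖x‖ ^ 2 * ‖φ x‖ ≤ C2 := by
    intro x
    have h0 := hC0 x
    have h2 := hC2 x
    rw [norm_iteratedFDeriv_zero] at h0 h2
    simpa using And.intro h0 h2
  refine ⟨C0 + C2, by positivity, fun x => ?_, fun x => ?_⟩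
  · rw [le_div_iff₀ (by positivity)]
    have h1 : x.1 ^ 2 * ‖φ x‖ ≤ C2 := by
      refine le_trans ?_ (key x).2
      have : |x.1| ≤ ‖x‖ := by
        rw [← Real.norm_eq_abs]; exact norm_fst_le x
      have hx : x.1 ^ 2 ≤ ‖x‖ ^ 2 := by
        rw [← sq_abs]; exact pow_le_pow_left₀ (abs_nonneg _) this 2
      exact mul_le_mul_of_nonneg_right hx (norm_nonneg _)
    nlinarith [(key x).1, norm_nonneg (φ x)]
  · rw [le_div_iff₀ (by positivity)]
    have h1 : x.2 ^ 2 * ‖φ x‖ ≤ C2 := by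
      refine le_trans ?_ (key x).2
      have : |x.2| ≤ ‖x‖ := by
        rw [← Real.norm_eq_abs]; exact norm_snd_le x
      have hx : x.2 ^ 2 ≤ ‖x‖ ^ 2 := by
        rw [← sq_abs]; exact pow_le_pow_left₀ (abs_nonneg _) this 2
      exact mul_le_mul_of_nonneg_right hx (norm_nonneg _)
    nlinarith [(key x).1, norm_nonneg (φ x)]

lemma curve1 (x₂ u : ℝ) : HasDerivAt (fun u : ℝ => ((u, x₂) : ℝ × ℝ)) ((1:ℝ), (0:ℝ)) u :=
  (hasDerivAt_id u).prodMk (hasDerivAt_const u x₂)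

lemma curve2 (x₁ u : ℝ) : HasDerivAt (fun u : ℝ => ((x₁, u) : ℝ × ℝ)) ((0:ℝ), (1:ℝ)) u :=
  (hasDerivAt_const u x₁).prodMk (hasDerivAt_id u)

lemma conj22' : Real.HolderConjugate 2 2 := ⟨by norm_num, by norm_num, by norm_num⟩

lemma agmon_fst (φ : SM) (x₂ s : ℝ) :
    (‖φ (s, x₂)‖₊ : ℝ≥0∞) ^ (2:ℝ) ≤
      2 * ((∫⁻ x₁, (‖φ (x₁, x₂)‖₊ : ℝ≥0∞) ^ (2:ℝ)) ^ ((1:ℝ)/2) *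
        (∫⁻ x₁, (‖D1 φ (x₁, x₂)‖₊ : ℝ≥0∞) ^ (2:ℝ)) ^ ((1:ℝ)/2)) := by
  obtain ⟨Ca, hCa, hba, -⟩ := schwartz_decay' φ
  obtain ⟨Cb, hCb, hbb, -⟩ := schwartz_decay' (D1 φ)
  have hd : ∀ u : ℝ, HasDerivAt (fun u : ℝ => φ (u, x₂)) (D1 φ (u, x₂)) u := by
    intro u
    exact (φ.differentiable.differentiableAt.hasFDerivAt).comp_hasDerivAt u (curve1 x₂ u)
  have hcd : Continuous fun u : ℝ => D1 φ (u, x₂) :=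
    (D1 φ).continuous.comp (continuous_id.prodMk continuous_const)
  exact agmon_line (C := max Ca Cb) hd hcd
    (fun u => (hba (u, x₂)).trans (by gcongr; exact le_max_left _ _))
    (fun u => (hbb (u, x₂)).trans (by gcongr; exact le_max_right _ _)) s

lemma agmon_snd (φ : SM) (x₁ s : ℝ) :
    (‖φ (x₁, s)‖₊ : ℝ≥0∞) ^ (2:ℝ) ≤
      2 * ((∫⁻ x₂, (‖φ (x₁, x₂)‖₊ : ℝ≥0∞) ^ (2:ℝ)) ^ ((1:ℝ)/2) *
        (∫⁻ x₂, (‖D2 φ (x₁, x₂)‖₊ : ℝ≥0∞) ^ (2:ℝ)) ^ ((1:ℝ)/2)) := by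
  obtain ⟨Ca, hCa, -, hba⟩ := schwartz_decay' φ
  obtain ⟨Cb, hCb, -, hbb⟩ := schwartz_decay' (D2 φ)
  have hd : ∀ u : ℝ, HasDerivAt (fun u : ℝ => φ (x₁, u)) (D2 φ (x₁, u)) u := by
    intro u
    exact (φ.differentiable.differentiableAt.hasFDerivAt).comp_hasDerivAt u (curve2 x₁ u)
  have hcd : Continuous fun u : ℝ => D2 φ (x₁, u) :=
    (D2 φ).continuous.comp (continuous_const.prodMk continuous_id)
  exact agmon_line (C := max Ca Cb) hd hcd
    (fun u => (hba (x₁, u)).trans (by gcongr; exact le_max_left _ _))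
    (fun u => (hbb (x₁, u)).trans (by gcongr; exact le_max_right _ _)) s

def Asq (φ : SM) (x₂ : ℝ) : ℝ≥0∞ := ∫⁻ x₁, (‖φ (x₁, x₂)‖₊ : ℝ≥0∞) ^ (2:ℝ)
def Bsq (φ : SM) (x₁ : ℝ) : ℝ≥0∞ := ∫⁻ x₂, (‖φ (x₁, x₂)‖₊ : ℝ≥0∞) ^ (2:ℝ)

lemma meas_nnsq (φ : SM) (r : ℝ) : Measurable fun x : ℝ × ℝ => (‖φ x‖₊ : ℝ≥0∞) ^ r :=
  (measurable_coe_nnreal_ennreal.comp φ.continuous.nnnorm.measurable).pow measurable_const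

lemma meas_Asq (φ : SM) : Measurable fun x₂ => Asq φ x₂ :=
  Measurable.lintegral_prod_left' (meas_nnsq φ 2)

lemma meas_Bsq (φ : SM) : Measurable fun x₁ => Bsq φ x₁ :=
  Measurable.lintegral_prod_right' (meas_nnsq φ 2)

lemma lint_Asq (φ : SM) : ∫⁻ x₂, Asq φ x₂ = ∫⁻ x : ℝ × ℝ, (‖φ x‖₊ : ℝ≥0∞) ^ (2:ℝ) := by
  rw [MeasureTheory.Measure.volume_eq_prod ℝ ℝ, lintegral_prod_symm _ (meas_nnsq φ 2).aemeasurable]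
  rfl

lemma lint_Bsq (φ : SM) : ∫⁻ x₁, Bsq φ x₁ = ∫⁻ x : ℝ × ℝ, (‖φ x‖₊ : ℝ≥0∞) ^ (2:ℝ) := by
  rw [MeasureTheory.Measure.volume_eq_prod ℝ ℝ, lintegral_prod _ (meas_nnsq φ 2).aemeasurable]
  rfl

lemma h1sq (φ : SM) : (H1Norm ⇑φ) ^ (2:ℝ) =
    ∫⁻ x : ℝ × ℝ, ((‖D1 φ x‖₊ : ℝ≥0∞) ^ (2:ℝ) + (‖D2 φ x‖₊ : ℝ≥0∞) ^ (2:ℝ) +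
      (‖φ x‖₊ : ℝ≥0∞) ^ (2:ℝ)) := by
  rw [H1Norm, ← ENNReal.rpow_mul]
  norm_num
  simp only [pd1_eq, pd2_eq]

lemma lint_sq_le (φ : SM) : ∫⁻ x : ℝ × ℝ, (‖φ x‖₊ : ℝ≥0∞) ^ (2:ℝ) ≤ (H1Norm ⇑φ) ^ (2:ℝ) := by
  rw [h1sq]; exact lintegral_mono fun x => le_add_self

lemma lint_d1_le (φ : SM) : ∫⁻ x : ℝ × ℝ, (‖D1 φ x‖₊ : ℝ≥0∞) ^ (2:ℝ) ≤ (H1Norm ⇑φ) ^ (2:ℝ) := by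
  rw [h1sq]
  exact lintegral_mono fun x => le_add_right (le_add_right le_rfl)

lemma lint_d2_le (φ : SM) : ∫⁻ x : ℝ × ℝ, (‖D2 φ x‖₊ : ℝ≥0∞) ^ (2:ℝ) ≤ (H1Norm ⇑φ) ^ (2:ℝ) := by
  rw [h1sq]
  exact lintegral_mono fun x => le_add_right (self_le_add_left _ _)

lemma half_half (x : ℝ≥0∞) : x ^ ((1:ℝ)/2) * x ^ ((1:ℝ)/2) = x := by
  rw [← ENNReal.rpow_add_of_nonneg _ _ (by norm_num) (by norm_num)]
  norm_num

lemma rpow_half_sq (x : ℝ≥0∞) : (x ^ ((1:ℝ)/2)) ^ (2:ℝ) = x := by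
  rw [← ENNReal.rpow_mul]; norm_num

lemma Asq_le (φ : SM) (x₂ : ℝ) : Asq φ x₂ ≤ 2 * (H1Norm ⇑φ) ^ (2:ℝ) := by
  calc Asq φ x₂ ≤ ∫⁻ x₁, 2 * ((Bsq φ x₁) ^ ((1:ℝ)/2) * (Bsq (D2 φ) x₁) ^ ((1:ℝ)/2)) :=
        lintegral_mono fun x₁ => agmon_snd φ x₁ x₂
    _ = 2 * ∫⁻ x₁, (Bsq φ x₁) ^ ((1:ℝ)/2) * (Bsq (D2 φ) x₁) ^ ((1:ℝ)/2) := by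
        rw [lintegral_const_mul]
        exact ((meas_Bsq φ).pow measurable_const).mul ((meas_Bsq (D2 φ)).pow measurable_const)
    _ ≤ 2 * ((∫⁻ x₁, ((Bsq φ x₁) ^ ((1:ℝ)/2)) ^ (2:ℝ)) ^ ((1:ℝ)/2) *
          (∫⁻ x₁, ((Bsq (D2 φ) x₁) ^ ((1:ℝ)/2)) ^ (2:ℝ)) ^ ((1:ℝ)/2)) := by
        refine mul_le_mul_right ?_ 2
        exact ENNReal.lintegral_mul_le_Lp_mul_Lq volume conj22'
          ((meas_Bsq φ).pow measurable_const).aemeasurable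
          ((meas_Bsq (D2 φ)).pow measurable_const).aemeasurable
    _ = 2 * ((∫⁻ x₁, Bsq φ x₁) ^ ((1:ℝ)/2) * (∫⁻ x₁, Bsq (D2 φ) x₁) ^ ((1:ℝ)/2)) := by
        simp only [rpow_half_sq]
    _ ≤ 2 * (((H1Norm ⇑φ) ^ (2:ℝ)) ^ ((1:ℝ)/2) * ((H1Norm ⇑φ) ^ (2:ℝ)) ^ ((1:ℝ)/2)) := by
        refine mul_le_mul_right (mul_le_mul' ?_ ?_) 2
        · exact ENNReal.rpow_le_rpow ((lint_Bsq φ).le.trans (lint_sq_le φ)) (by norm_num)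
        · exact ENNReal.rpow_le_rpow ((lint_Bsq (D2 φ)).le.trans (lint_d2_le φ)) (by norm_num)
    _ = 2 * (H1Norm ⇑φ) ^ (2:ℝ) := by rw [half_half]
lemma conj_13 : Real.HolderConjugate (13/9) (13/4) := ⟨by norm_num, by norm_num, by norm_num⟩
lemma conj_18 : Real.HolderConjugate (18/13) (18/5) := ⟨by norm_num, by norm_num, by norm_num⟩

lemma pow_alg (a c d : ℝ≥0∞) :
    (a ^ ((9:ℝ)/13) * ((2 * (c ^ ((1:ℝ)/2) * d ^ ((1:ℝ)/2))) ^ ((5:ℝ)/4) * c) ^ ((4:ℝ)/13))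
        ^ ((13:ℝ)/9)
      ≤ 2 * (a * (c ^ ((13:ℝ)/18) * d ^ ((5:ℝ)/18))) := by
  have M : ∀ (x y : ℝ≥0∞) (r : ℝ), 0 ≤ r → (x * y) ^ r = x ^ r * y ^ r := fun x y r hr =>
    ENNReal.mul_rpow_of_nonneg x y hr
  have e1 : (2 * (c ^ ((1:ℝ)/2) * d ^ ((1:ℝ)/2))) ^ ((5:ℝ)/4)
      = (2:ℝ≥0∞) ^ ((5:ℝ)/4) * (c ^ ((5:ℝ)/8) * d ^ ((5:ℝ)/8)) := by
    rw [M _ _ _ (by norm_num), M _ _ _ (by norm_num), ← ENNReal.rpow_mul, ← ENNReal.rpow_mul]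
    norm_num
  have e2 : ((2:ℝ≥0∞) ^ ((5:ℝ)/4) * (c ^ ((5:ℝ)/8) * d ^ ((5:ℝ)/8)) * c) ^ ((4:ℝ)/13)
      = (2:ℝ≥0∞) ^ ((5:ℝ)/13) * (c ^ ((5:ℝ)/26) * d ^ ((5:ℝ)/26) * c ^ ((4:ℝ)/13)) := by
    rw [M _ _ _ (by norm_num), M _ _ _ (by norm_num), M _ _ _ (by norm_num),
      ← ENNReal.rpow_mul, ← ENNReal.rpow_mul, ← ENNReal.rpow_mul]
    norm_num; ring
  have e3 : c ^ ((5:ℝ)/26) * d ^ ((5:ℝ)/26) * c ^ ((4:ℝ)/13)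
      = c ^ ((13:ℝ)/26) * d ^ ((5:ℝ)/26) := by
    rw [mul_right_comm, ← ENNReal.rpow_add_of_nonneg _ _ (by norm_num) (by norm_num)]
    norm_num
  rw [e1, e2, e3, M _ _ _ (by norm_num), M _ _ _ (by norm_num), M _ _ _ (by norm_num),
    ← ENNReal.rpow_mul, ← ENNReal.rpow_mul, ← ENNReal.rpow_mul, ← ENNReal.rpow_mul]
  norm_num
  calc a * ((2:ℝ≥0∞) ^ ((5:ℝ)/9) * (c ^ ((13:ℝ)/18) * d ^ ((5:ℝ)/18)))
      ≤ a * ((2:ℝ≥0∞) ^ (1:ℝ) * (c ^ ((13:ℝ)/18) * d ^ ((5:ℝ)/18))) := by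
        refine mul_le_mul_right (mul_le_mul_left ?_ _) _
        exact ENNReal.rpow_le_rpow_of_exponent_le one_le_two (by norm_num)
    _ = 2 * (a * (c ^ ((13:ℝ)/18) * d ^ ((5:ℝ)/18))) := by
        rw [ENNReal.rpow_one]; ring

lemma inner_bound (φ γ : SM) (x₂ : ℝ) :
    (∫⁻ x₁, (‖φ (x₁, x₂) * γ (x₁, x₂)‖₊ : ℝ≥0∞) ^ ((18:ℝ)/13)) ^ ((13:ℝ)/9)
      ≤ 2 * (Asq φ x₂ * ((Asq γ x₂) ^ ((13:ℝ)/18) * (Asq (D1 γ) x₂) ^ ((5:ℝ)/18))) := by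
  set F : ℝ → ℝ≥0∞ := fun x₁ => (‖φ (x₁, x₂)‖₊ : ℝ≥0∞) with hF
  set G : ℝ → ℝ≥0∞ := fun x₁ => (‖γ (x₁, x₂)‖₊ : ℝ≥0∞) with hG
  have hFm : Measurable F := measurable_coe_nnreal_ennreal.comp
    ((φ.continuous.comp (continuous_id.prodMk continuous_const)).nnnorm.measurable)
  have hGm : Measurable G := measurable_coe_nnreal_ennreal.comp
    ((γ.continuous.comp (continuous_id.prodMk continuous_const)).nnnorm.measurable)
  have step1 : (∫⁻ x₁, (‖φ (x₁, x₂) * γ (x₁, x₂)‖₊ : ℝ≥0∞) ^ ((18:ℝ)/13))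
      ≤ (∫⁻ x₁, F x₁ ^ (2:ℝ)) ^ ((9:ℝ)/13) * (∫⁻ x₁, G x₁ ^ ((9:ℝ)/2)) ^ ((4:ℝ)/13) := by
    have heq : ∀ x₁ : ℝ, (‖φ (x₁, x₂) * γ (x₁, x₂)‖₊ : ℝ≥0∞) ^ ((18:ℝ)/13)
        = (F x₁ ^ ((18:ℝ)/13)) * (G x₁ ^ ((18:ℝ)/13)) := by
      intro x₁
      rw [nnnorm_mul, ENNReal.coe_mul, ENNReal.mul_rpow_of_nonneg _ _ (by norm_num)]
    calc (∫⁻ x₁, (‖φ (x₁, x₂) * γ (x₁, x₂)‖₊ : ℝ≥0∞) ^ ((18:ℝ)/13))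
        = ∫⁻ x₁, (F x₁ ^ ((18:ℝ)/13)) * (G x₁ ^ ((18:ℝ)/13)) := lintegral_congr heq
      _ ≤ (∫⁻ x₁, (F x₁ ^ ((18:ℝ)/13)) ^ ((13:ℝ)/9)) ^ ((9:ℝ)/13) *
          (∫⁻ x₁, (G x₁ ^ ((18:ℝ)/13)) ^ ((13:ℝ)/4)) ^ ((4:ℝ)/13) := by
          have := ENNReal.lintegral_mul_le_Lp_mul_Lq volume conj_13
            ((hFm.pow measurable_const).aemeasurable : AEMeasurable (fun x₁ => F x₁ ^ ((18:ℝ)/13)) volume)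
            ((hGm.pow measurable_const).aemeasurable : AEMeasurable (fun x₁ => G x₁ ^ ((18:ℝ)/13)) volume)
          simpa [one_div] using this
      _ = (∫⁻ x₁, F x₁ ^ (2:ℝ)) ^ ((9:ℝ)/13) * (∫⁻ x₁, G x₁ ^ ((9:ℝ)/2)) ^ ((4:ℝ)/13) := by
          congr 1
          · congr 1; apply lintegral_congr; intro x₁
            rw [← ENNReal.rpow_mul]; norm_num
          · congr 1; apply lintegral_congr; intro x₁
            rw [← ENNReal.rpow_mul]; norm_num
  have step2 : (∫⁻ x₁, G x₁ ^ ((9:ℝ)/2))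
      ≤ (2 * ((Asq γ x₂) ^ ((1:ℝ)/2) * (Asq (D1 γ) x₂) ^ ((1:ℝ)/2))) ^ ((5:ℝ)/4) * Asq γ x₂ := by
    have hptw : ∀ x₁ : ℝ, G x₁ ^ ((9:ℝ)/2)
        ≤ (2 * ((Asq γ x₂) ^ ((1:ℝ)/2) * (Asq (D1 γ) x₂) ^ ((1:ℝ)/2))) ^ ((5:ℝ)/4) * G x₁ ^ (2:ℝ) := by
      intro x₁
      have h1 : G x₁ ^ ((9:ℝ)/2) = (G x₁ ^ (2:ℝ)) ^ ((5:ℝ)/4) * G x₁ ^ (2:ℝ) := by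
        rw [← ENNReal.rpow_mul, ← ENNReal.rpow_add_of_nonneg _ _ (by norm_num) (by norm_num)]
        norm_num
      rw [h1]
      refine mul_le_mul_left (ENNReal.rpow_le_rpow ?_ (by norm_num)) _
      exact agmon_fst γ x₂ x₁
    calc (∫⁻ x₁, G x₁ ^ ((9:ℝ)/2))
        ≤ ∫⁻ x₁, (2 * ((Asq γ x₂) ^ ((1:ℝ)/2) * (Asq (D1 γ) x₂) ^ ((1:ℝ)/2))) ^ ((5:ℝ)/4) *
            G x₁ ^ (2:ℝ) := lintegral_mono hptw
      _ = (2 * ((Asq γ x₂) ^ ((1:ℝ)/2) * (Asq (D1 γ) x₂) ^ ((1:ℝ)/2))) ^ ((5:ℝ)/4) * Asq γ x₂ := by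
          rw [lintegral_const_mul _ (hGm.pow measurable_const)]
          rfl
  calc (∫⁻ x₁, (‖φ (x₁, x₂) * γ (x₁, x₂)‖₊ : ℝ≥0∞) ^ ((18:ℝ)/13)) ^ ((13:ℝ)/9)
      ≤ ((Asq φ x₂) ^ ((9:ℝ)/13) *
          ((2 * ((Asq γ x₂) ^ ((1:ℝ)/2) * (Asq (D1 γ) x₂) ^ ((1:ℝ)/2))) ^ ((5:ℝ)/4) * Asq γ x₂)
            ^ ((4:ℝ)/13)) ^ ((13:ℝ)/9) := by
        refine ENNReal.rpow_le_rpow ?_ (by norm_num)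
        refine step1.trans (mul_le_mul' le_rfl ?_)
        exact ENNReal.rpow_le_rpow step2 (by norm_num)
    _ ≤ 2 * (Asq φ x₂ * ((Asq γ x₂) ^ ((13:ℝ)/18) * (Asq (D1 γ) x₂) ^ ((5:ℝ)/18))) :=
        pow_alg _ _ _

lemma key_lemma (φ γ : SM) :
    ∫⁻ x₂, (∫⁻ x₁, (‖φ (x₁, x₂) * γ (x₁, x₂)‖₊ : ℝ≥0∞) ^ ((18:ℝ)/13)) ^ ((13:ℝ)/9)
      ≤ 4 * ((H1Norm ⇑φ) ^ (2:ℝ) * (H1Norm ⇑γ) ^ (2:ℝ)) := by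
  set P := (H1Norm ⇑φ) ^ (2:ℝ) with hP
  set Q := (H1Norm ⇑γ) ^ (2:ℝ) with hQ
  have hmeas : Measurable fun x₂ => (Asq γ x₂) ^ ((13:ℝ)/18) * (Asq (D1 γ) x₂) ^ ((5:ℝ)/18) :=
    ((meas_Asq γ).pow measurable_const).mul ((meas_Asq (D1 γ)).pow measurable_const)
  calc ∫⁻ x₂, (∫⁻ x₁, (‖φ (x₁, x₂) * γ (x₁, x₂)‖₊ : ℝ≥0∞) ^ ((18:ℝ)/13)) ^ ((13:ℝ)/9)
      ≤ ∫⁻ x₂, 2 * (Asq φ x₂ * ((Asq γ x₂) ^ ((13:ℝ)/18) * (Asq (D1 γ) x₂) ^ ((5:ℝ)/18))) :=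
        lintegral_mono (inner_bound φ γ)
    _ ≤ ∫⁻ x₂, (4 * P) * ((Asq γ x₂) ^ ((13:ℝ)/18) * (Asq (D1 γ) x₂) ^ ((5:ℝ)/18)) := by
        apply lintegral_mono
        intro x₂
        have := mul_le_mul_left (Asq_le φ x₂) ((Asq γ x₂) ^ ((13:ℝ)/18) * (Asq (D1 γ) x₂) ^ ((5:ℝ)/18))
        calc 2 * (Asq φ x₂ * ((Asq γ x₂) ^ ((13:ℝ)/18) * (Asq (D1 γ) x₂) ^ ((5:ℝ)/18)))
            ≤ 2 * ((2 * P) * ((Asq γ x₂) ^ ((13:ℝ)/18) * (Asq (D1 γ) x₂) ^ ((5:ℝ)/18))) :=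
              mul_le_mul_right this 2
          _ = (4 * P) * ((Asq γ x₂) ^ ((13:ℝ)/18) * (Asq (D1 γ) x₂) ^ ((5:ℝ)/18)) := by ring
    _ = (4 * P) * ∫⁻ x₂, (Asq γ x₂) ^ ((13:ℝ)/18) * (Asq (D1 γ) x₂) ^ ((5:ℝ)/18) :=
        lintegral_const_mul _ hmeas
    _ ≤ (4 * P) * ((∫⁻ x₂, Asq γ x₂) ^ ((13:ℝ)/18) * (∫⁻ x₂, Asq (D1 γ) x₂) ^ ((5:ℝ)/18)) := by
        refine mul_le_mul_right ?_ _
        have h18 := ENNReal.lintegral_mul_le_Lp_mul_Lq volume conj_18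
          (f := fun x₂ => (Asq γ x₂) ^ ((13:ℝ)/18)) (g := fun x₂ => (Asq (D1 γ) x₂) ^ ((5:ℝ)/18))
          ((meas_Asq γ).pow measurable_const).aemeasurable
          ((meas_Asq (D1 γ)).pow measurable_const).aemeasurable
        have e1 : ∀ x₂:ℝ, ((Asq γ x₂) ^ ((13:ℝ)/18)) ^ ((18:ℝ)/13) = Asq γ x₂ := by
          intro x₂; rw [← ENNReal.rpow_mul]; norm_num
        have e2 : ∀ x₂:ℝ, ((Asq (D1 γ) x₂) ^ ((5:ℝ)/18)) ^ ((18:ℝ)/5) = Asq (D1 γ) x₂ := by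
          intro x₂; rw [← ENNReal.rpow_mul]; norm_num
        rw [lintegral_congr e1, lintegral_congr e2] at h18
        simpa [one_div] using h18
    _ ≤ (4 * P) * (Q ^ ((13:ℝ)/18) * Q ^ ((5:ℝ)/18)) := by
        refine mul_le_mul_right (mul_le_mul' ?_ ?_) _
        · exact ENNReal.rpow_le_rpow ((lint_Asq γ).le.trans (lint_sq_le γ)) (by norm_num)
        · exact ENNReal.rpow_le_rpow ((lint_Asq (D1 γ)).le.trans (lint_d1_le γ)) (by norm_num)
    _ = 4 * (P * Q) := by
        rw [← ENNReal.rpow_add_of_nonneg _ _ (by norm_num) (by norm_num)]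
        norm_num
        ring

lemma eval_cont : Continuous fun q : SM × (ℝ × ℝ) => q.1 q.2 := by
  have hm : Continuous fun q : SM × (ℝ × ℝ) =>
      ((SchwartzMap.toBoundedContinuousFunctionCLM ℝ (ℝ × ℝ) ℂ q.1), q.2) :=
    ((SchwartzMap.toBoundedContinuousFunctionCLM ℝ (ℝ × ℝ) ℂ).continuous.comp
      continuous_fst).prodMk continuous_snd
  have h := continuous_eval.comp hm
  exact h

lemma hcomp {T : ℝ} (g : ℝ → SM) (hg : ContinuousOn g (Set.Icc 0 T)) :
    ContinuousOn (fun p : ℝ × (ℝ × ℝ) => (‖g p.1 p.2‖₊ : ℝ≥0∞) ^ (2:ℝ))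
      ((Set.Icc 0 T) ×ˢ Set.univ) := by
  have h1 : ContinuousOn (fun p : ℝ × (ℝ × ℝ) => ((g p.1 : SM), p.2))
      ((Set.Icc 0 T) ×ˢ Set.univ) :=
    (hg.comp continuousOn_fst (fun p hp => hp.1)).prodMk continuousOn_snd
  have h2 : ContinuousOn (fun p : ℝ × (ℝ × ℝ) => g p.1 p.2) ((Set.Icc 0 T) ×ˢ Set.univ) :=
    eval_cont.comp_continuousOn h1
  exact (ENNReal.continuous_rpow_const.comp
    (ENNReal.continuous_coe.comp continuous_nnnorm)).comp_continuousOn h2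

lemma h1_meas {T : ℝ} {f : ℝ → SM} (hf : ContinuousOn f (Set.Icc 0 T)) :
    AEMeasurable (fun t => (H1Norm ⇑(f t)) ^ (4:ℝ)) (volume.restrict (Set.Icc 0 T)) := by
  have hd1 : ContinuousOn (fun t => D1 (f t)) (Set.Icc 0 T) :=
    (LineDeriv.lineDerivOpCLM ℝ SM ((1:ℝ),(0:ℝ))).continuous.comp_continuousOn hf
  have hd2 : ContinuousOn (fun t => D2 (f t)) (Set.Icc 0 T) :=
    (LineDeriv.lineDerivOpCLM ℝ SM ((0:ℝ),(1:ℝ))).continuous.comp_continuousOn hf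
  have c1 := hcomp _ hd1
  have c2 := hcomp _ hd2
  have c3 := hcomp _ hf
  have hFc := (c1.add c2).add c3
  have hmeasset : MeasurableSet ((Set.Icc (0:ℝ) T) ×ˢ (Set.univ : Set (ℝ × ℝ))) :=
    measurableSet_Icc.prod MeasurableSet.univ
  have hFae : AEMeasurable
      (fun p : ℝ × (ℝ × ℝ) => (‖D1 (f p.1) p.2‖₊ : ℝ≥0∞) ^ (2:ℝ) +
        (‖D2 (f p.1) p.2‖₊ : ℝ≥0∞) ^ (2:ℝ) + (‖f p.1 p.2‖₊ : ℝ≥0∞) ^ (2:ℝ))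
      ((volume.restrict (Set.Icc 0 T)).prod volume) := by
    rw [show (volume.restrict (Set.Icc (0:ℝ) T)).prod (volume : Measure (ℝ × ℝ))
        = ((volume : Measure ℝ).prod volume).restrict ((Set.Icc (0:ℝ) T) ×ˢ Set.univ) by
      rw [← Measure.restrict_univ (μ := (volume : Measure (ℝ × ℝ))), Measure.prod_restrict,
        Measure.restrict_univ]]
    exact hFc.aemeasurable hmeasset
  obtain ⟨G, hGm, hGe⟩ := hFae
  have hlm : AEMeasurable (fun t => ∫⁻ x, ((‖D1 (f t) x‖₊ : ℝ≥0∞) ^ (2:ℝ) +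
      (‖D2 (f t) x‖₊ : ℝ≥0∞) ^ (2:ℝ) + (‖f t x‖₊ : ℝ≥0∞) ^ (2:ℝ)))
      (volume.restrict (Set.Icc 0 T)) := by
    refine ⟨fun t => ∫⁻ x, G (t, x), hGm.lintegral_prod_right', ?_⟩
    have hae := Measure.ae_ae_of_ae_prod hGe
    filter_upwards [hae] with t ht
    exact lintegral_congr_ae ht
  have hrw : (fun t => (H1Norm ⇑(f t)) ^ (4:ℝ)) = fun t => (∫⁻ x, ((‖D1 (f t) x‖₊ : ℝ≥0∞) ^ (2:ℝ) +
      (‖D2 (f t) x‖₊ : ℝ≥0∞) ^ (2:ℝ) + (‖f t x‖₊ : ℝ≥0∞) ^ (2:ℝ))) ^ (2:ℝ) := by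
    funext t
    rw [H1Norm, ← ENNReal.rpow_mul]
    norm_num
    rw [pd1_eq, pd2_eq]
  rw [hrw]
  exact hlm.pow aemeasurable_const

lemma mul_sq_le_add (x y : ℝ≥0∞) : x ^ (2:ℝ) * y ^ (2:ℝ) ≤ x ^ (4:ℝ) + y ^ (4:ℝ) := by
  have hm : ∀ a : ℝ≥0∞, a ^ (2:ℝ) * a ^ (2:ℝ) = a ^ (4:ℝ) := by
    intro a
    rw [← ENNReal.rpow_add_of_nonneg _ _ (by norm_num) (by norm_num)]
    norm_num
  rcases le_total x y with h | h
  · calc x ^ (2:ℝ) * y ^ (2:ℝ) ≤ y ^ (2:ℝ) * y ^ (2:ℝ) :=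
        mul_le_mul_left (ENNReal.rpow_le_rpow h (by norm_num)) _
      _ = y ^ (4:ℝ) := hm y
      _ ≤ x ^ (4:ℝ) + y ^ (4:ℝ) := self_le_add_left _ _
  · calc x ^ (2:ℝ) * y ^ (2:ℝ) ≤ x ^ (2:ℝ) * x ^ (2:ℝ) :=
        mul_le_mul_right (ENNReal.rpow_le_rpow h (by norm_num)) _
      _ = x ^ (4:ℝ) := hm x
      _ ≤ x ^ (4:ℝ) + y ^ (4:ℝ) := le_add_right le_rfl

lemma sq_add_le (x y : ℝ≥0∞) : x ^ (2:ℝ) + y ^ (2:ℝ) ≤ (x + y) ^ (2:ℝ) := by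
  have h2 : ∀ a : ℝ≥0∞, a ^ (2:ℝ) = a * a := by
    intro a
    rw [show (2:ℝ) = ((2:ℕ):ℝ) by norm_num, ENNReal.rpow_natCast]
    exact sq a
  rw [h2, h2, h2]
  have e : (x + y) * (x + y) = x * x + (x * y + (y * x + y * y)) := by ring
  rw [e]
  refine add_le_add le_rfl ?_
  exact le_add_left (self_le_add_left _ _)


/-- a space-time product estimate in `L²_T L²_{x₂} L^{18/13}_{x₁}`. -/
theorem stmt13 :
    ∃ C : ℝ, 0 < C ∧ ∀ T : ℝ, 0 < T →
      ∀ f g : ℝ → SchwartzMap (ℝ × ℝ) ℂ,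
        ContinuousOn f (Set.Icc 0 T) → ContinuousOn g (Set.Icc 0 T) →
          (∫⁻ t in Set.Icc (0:ℝ) T, ∫⁻ x₂ : ℝ,
              (∫⁻ x₁ : ℝ,
                  (‖f t (x₁, x₂) * g t (x₁, x₂)‖₊ : ℝ≥0∞) ^ ((18:ℝ)/13)) ^ ((13:ℝ)/9))
              ^ ((1:ℝ)/2)
            ≤ ENNReal.ofReal C *
                ((∫⁻ t in Set.Icc (0:ℝ) T, (H1Norm ⇑(f t)) ^ (4:ℝ)) ^ ((1:ℝ)/2) +
                 (∫⁻ t in Set.Icc (0:ℝ) T, (H1Norm ⇑(g t)) ^ (4:ℝ)) ^ ((1:ℝ)/2)) := by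
  refine ⟨2, by norm_num, ?_⟩
  intro T hT f g hf hg
  have hu := h1_meas hf
  have hv := h1_meas hg
  set u : ℝ → ℝ≥0∞ := fun t => (H1Norm ⇑(f t)) ^ (4:ℝ) with hudef
  set v : ℝ → ℝ≥0∞ := fun t => (H1Norm ⇑(g t)) ^ (4:ℝ) with hvdef
  set X := (∫⁻ t in Set.Icc (0:ℝ) T, u t) ^ ((1:ℝ)/2) with hX
  set Y := (∫⁻ t in Set.Icc (0:ℝ) T, v t) ^ ((1:ℝ)/2) with hY
  have step1 : (∫⁻ t in Set.Icc (0:ℝ) T, ∫⁻ x₂ : ℝ,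
        (∫⁻ x₁ : ℝ, (‖f t (x₁, x₂) * g t (x₁, x₂)‖₊ : ℝ≥0∞) ^ ((18:ℝ)/13)) ^ ((13:ℝ)/9))
      ≤ ∫⁻ t in Set.Icc (0:ℝ) T, 4 * (u t + v t) := by
    apply lintegral_mono
    intro t
    refine (key_lemma (f t) (g t)).trans ?_
    exact mul_le_mul_right (mul_sq_le_add _ _) 4
  have step2 : (∫⁻ t in Set.Icc (0:ℝ) T, 4 * (u t + v t))
      = 4 * (X ^ (2:ℝ) + Y ^ (2:ℝ)) := by
    rw [lintegral_const_mul' _ _ (by norm_num : (4:ℝ≥0∞) ≠ ⊤), lintegral_add_left' hu,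
      hX, hY, rpow_half_sq, rpow_half_sq]
  have four_half : (4:ℝ≥0∞) ^ ((1:ℝ)/2) = 2 := by
    rw [show (4:ℝ≥0∞) = 2 ^ (2:ℝ) by
      rw [show (2:ℝ) = ((2:ℕ):ℝ) by norm_num, ENNReal.rpow_natCast]; norm_num,
      ← ENNReal.rpow_mul]
    norm_num
  calc (∫⁻ t in Set.Icc (0:ℝ) T, ∫⁻ x₂ : ℝ,
        (∫⁻ x₁ : ℝ, (‖f t (x₁, x₂) * g t (x₁, x₂)‖₊ : ℝ≥0∞) ^ ((18:ℝ)/13)) ^ ((13:ℝ)/9))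
          ^ ((1:ℝ)/2)
      ≤ (4 * (X ^ (2:ℝ) + Y ^ (2:ℝ))) ^ ((1:ℝ)/2) := by
        rw [← step2]
        exact ENNReal.rpow_le_rpow step1 (by norm_num)
    _ ≤ (4 * (X + Y) ^ (2:ℝ)) ^ ((1:ℝ)/2) := by
        exact ENNReal.rpow_le_rpow (mul_le_mul_right (sq_add_le X Y) 4) (by norm_num)
    _ = 2 * (X + Y) := by
        rw [ENNReal.mul_rpow_of_nonneg _ _ (by norm_num : (0:ℝ) ≤ 1/2), four_half,
          ← ENNReal.rpow_mul]
        norm_num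
    _ = ENNReal.ofReal 2 * (X + Y) := by
        rw [ENNReal.ofReal_ofNat]
end
end

section
/- For every K > 0 there exists a constant C = C(K) > 0 such that: if γ : ℝ² → (0,∞) is a C² function satisfying |∇γ(y)| ≤ K γ(y) for all y and |∂^β γ(y)| ≤ K γ(y) for all y and all multi-indices β with |β| = 2, then for every Schwartz function f on ℝ²: (∫_{ℝ²} f⁴ γ dy)^{1/2} ≤ C ‖f‖_{L²(ℝ²)} (∫_{ℝ²} (|∇f|² + f²) γ dy)^{1/2}. -/
open MeasureTheory
open scoped ENNReal NNReal

noncomputable section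

/-- Partial derivative ∂_{y₁} of a real-valued function on ℝ². -/
def pdr1 (f : ℝ × ℝ → ℝ) : ℝ × ℝ → ℝ := fun y => fderiv ℝ f y (1, 0)

/-- Partial derivative ∂_{y₂} of a real-valued function on ℝ². -/
def pdr2 (f : ℝ × ℝ → ℝ) : ℝ × ℝ → ℝ := fun y => fderiv ℝ f y (0, 1)

/-- A positive `C²` weight `γ` whose first and second logarithmic
derivatives are bounded by `K`. -/
structure IsGoodWeight (K : ℝ) (γ : ℝ × ℝ → ℝ) : Prop where
  contDiff : ContDiff ℝ 2 γ
  pos : ∀ y, 0 < γ y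
  grad_le : ∀ y, Real.sqrt ((pdr1 γ y) ^ 2 + (pdr2 γ y) ^ 2) ≤ K * γ y
  d11_le : ∀ y, |pdr1 (pdr1 γ) y| ≤ K * γ y
  d12_le : ∀ y, |pdr1 (pdr2 γ) y| ≤ K * γ y
  d21_le : ∀ y, |pdr2 (pdr1 γ) y| ≤ K * γ y
  d22_le : ∀ y, |pdr2 (pdr2 γ) y| ≤ K * γ y


open Set Filter

/-! ### Auxiliary lemmas -/

/-- 1D: a nonneg integrable function with integrable derivative is bounded by `∫ |g'|`. -/
lemma line_bound {g g' : ℝ → ℝ} (hd : ∀ x, HasDerivAt g (g' x) x)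
    (hgi : Integrable g) (hg'i : Integrable g') (a : ℝ) :
    g a ≤ ∫ x, |g' x| := by
  have hlim : Tendsto g atBot (nhds 0) :=
    tendsto_zero_of_hasDerivAt_of_integrableOn_Iic (a := a) (fun x _ => hd x)
      hg'i.integrableOn hgi.integrableOn
  have h1 : ∫ x in Iic a, g' x = g a - 0 :=
    integral_Iic_of_hasDerivAt_of_tendsto' (fun x _ => hd x) hg'i.integrableOn hlim
  have h2 : ∫ x in Iic a, g' x ≤ ∫ x in Iic a, |g' x| :=
    integral_mono hg'i.integrableOn hg'i.abs.integrableOn fun x => le_abs_self _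
  have h3 : ∫ x in Iic a, |g' x| ≤ ∫ x, |g' x| :=
    setIntegral_le_integral hg'i.abs (Eventually.of_forall fun x => abs_nonneg _)
  linarith

/-- Cauchy–Schwarz for lintegrals of `ofReal` products. -/
lemma lintegral_cs {α : Type*} [MeasurableSpace α] (μ : Measure α) {u v : α → ℝ}
    (hu : Measurable u) (hv : Measurable v) :
    ∫⁻ x, ENNReal.ofReal (u x * v x) ∂μ ≤
      (∫⁻ x, ENNReal.ofReal ((u x) ^ 2) ∂μ) ^ ((1:ℝ)/2) *
        (∫⁻ x, ENNReal.ofReal ((v x) ^ 2) ∂μ) ^ ((1:ℝ)/2) := by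
  have h2 : Real.HolderConjugate 2 2 := Real.HolderConjugate.two_two
  have step1 : ∫⁻ x, ENNReal.ofReal (u x * v x) ∂μ ≤
      ∫⁻ x, ((fun x => ENNReal.ofReal |u x|) * fun x => ENNReal.ofReal |v x|) x ∂μ := by
    apply lintegral_mono
    intro x
    simp only [Pi.mul_apply]
    rw [← ENNReal.ofReal_mul (abs_nonneg _), ← abs_mul]
    exact ENNReal.ofReal_le_ofReal (le_abs_self _)
  have step2 := ENNReal.lintegral_mul_le_Lp_mul_Lq μ h2
    (f := fun x => ENNReal.ofReal |u x|) (g := fun x => ENNReal.ofReal |v x|)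
    (hu.abs.ennreal_ofReal).aemeasurable (hv.abs.ennreal_ofReal).aemeasurable
  refine (step1.trans step2).trans (le_of_eq ?_)
  congr 1
  · congr 1
    refine lintegral_congr fun x => ?_
    rw [ENNReal.ofReal_rpow_of_nonneg (abs_nonneg _) (by norm_num)]
    congr 1
    rw [show ((2:ℝ)) = ((2:ℕ):ℝ) by norm_num, Real.rpow_natCast, sq_abs]
  · congr 1
    refine lintegral_congr fun x => ?_
    rw [ENNReal.ofReal_rpow_of_nonneg (abs_nonneg _) (by norm_num)]
    congr 1
    rw [show ((2:ℝ)) = ((2:ℕ):ℝ) by norm_num, Real.rpow_natCast, sq_abs]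

/-- The auxiliary function `h = f² √γ`. -/
def hfun (γ : ℝ × ℝ → ℝ) (f : SchwartzMap (ℝ × ℝ) ℝ) : ℝ × ℝ → ℝ :=
  fun q => (f q * f q) * Real.sqrt (γ q)

lemma hfun_nonneg (γ : ℝ × ℝ → ℝ) (f : SchwartzMap (ℝ × ℝ) ℝ) (p : ℝ × ℝ) :
    0 ≤ hfun γ f p :=
  mul_nonneg (mul_self_nonneg _) (Real.sqrt_nonneg _)

lemma hfun_continuous (γ : ℝ × ℝ → ℝ) (hγ : ContDiff ℝ 2 γ) (f : SchwartzMap (ℝ × ℝ) ℝ) :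
    Continuous (hfun γ f) :=
  (f.continuous.mul f.continuous).mul (Real.continuous_sqrt.comp hγ.continuous)

lemma hfun_sq (γ : ℝ × ℝ → ℝ) (hpos : ∀ y, 0 < γ y) (f : SchwartzMap (ℝ × ℝ) ℝ) (p : ℝ × ℝ) :
    f p ^ 4 * γ p = hfun γ f p * hfun γ f p := by
  have hw2 : Real.sqrt (γ p) * Real.sqrt (γ p) = γ p := Real.mul_self_sqrt (hpos p).le
  unfold hfun
  calc f p ^ 4 * γ p = (f p * f p) * (f p * f p) * (Real.sqrt (γ p) * Real.sqrt (γ p)) := by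
        rw [hw2]; ring
    _ = _ := by ring

lemma h_hasFDerivAt (γ : ℝ × ℝ → ℝ) (hγ : ContDiff ℝ 2 γ) (hpos : ∀ y, 0 < γ y)
    (f : SchwartzMap (ℝ × ℝ) ℝ) (p : ℝ × ℝ) :
    HasFDerivAt (hfun γ f)
      ((f p * f p) • ((1 / (2 * Real.sqrt (γ p))) • fderiv ℝ γ p)
        + Real.sqrt (γ p) • (f p • fderiv ℝ (⇑f) p + f p • fderiv ℝ (⇑f) p)) p := by
  have hfd : HasFDerivAt (⇑f) (fderiv ℝ (⇑f) p) p := (f.differentiable p).hasFDerivAt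
  have hγd : HasFDerivAt γ (fderiv ℝ γ p) p :=
    ((hγ.differentiable (by norm_num)) p).hasFDerivAt
  have hs : HasDerivAt Real.sqrt (1 / (2 * Real.sqrt (γ p))) (γ p) :=
    Real.hasDerivAt_sqrt (ne_of_gt (hpos p))
  have hw : HasFDerivAt (fun q => Real.sqrt (γ q))
      ((1 / (2 * Real.sqrt (γ p))) • fderiv ℝ γ p) p := hs.comp_hasFDerivAt p hγd
  exact (hfd.mul hfd).mul hw

lemma pdr1_hfun_eq (γ : ℝ × ℝ → ℝ) (hγ : ContDiff ℝ 2 γ) (hpos : ∀ y, 0 < γ y)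
    (f : SchwartzMap (ℝ × ℝ) ℝ) (p : ℝ × ℝ) :
    pdr1 (hfun γ f) p
      = (f p * f p) * ((1 / (2 * Real.sqrt (γ p))) * pdr1 γ p)
        + Real.sqrt (γ p) * (f p * pdr1 (⇑f) p + f p * pdr1 (⇑f) p) := by
  unfold pdr1
  rw [(h_hasFDerivAt γ hγ hpos f p).fderiv]
  simp [ContinuousLinearMap.add_apply, ContinuousLinearMap.smul_apply, smul_eq_mul]
  ring

lemma pdr2_hfun_eq (γ : ℝ × ℝ → ℝ) (hγ : ContDiff ℝ 2 γ) (hpos : ∀ y, 0 < γ y)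
    (f : SchwartzMap (ℝ × ℝ) ℝ) (p : ℝ × ℝ) :
    pdr2 (hfun γ f) p
      = (f p * f p) * ((1 / (2 * Real.sqrt (γ p))) * pdr2 γ p)
        + Real.sqrt (γ p) * (f p * pdr2 (⇑f) p + f p * pdr2 (⇑f) p) := by
  unfold pdr2
  rw [(h_hasFDerivAt γ hγ hpos f p).fderiv]
  simp [ContinuousLinearMap.add_apply, ContinuousLinearMap.smul_apply, smul_eq_mul]
  ring

lemma line_hasDerivAt1 (γ : ℝ × ℝ → ℝ) (hγ : ContDiff ℝ 2 γ) (hpos : ∀ y, 0 < γ y)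
    (f : SchwartzMap (ℝ × ℝ) ℝ) (b t : ℝ) :
    HasDerivAt (fun s => hfun γ f (s, b)) (pdr1 (hfun γ f) (t, b)) t := by
  have H := h_hasFDerivAt γ hγ hpos f (t, b)
  have hcurve : HasDerivAt (fun s : ℝ => ((s, b) : ℝ × ℝ)) ((1 : ℝ), (0 : ℝ)) t :=
    HasDerivAt.prodMk (hasDerivAt_id t) (hasDerivAt_const t b)
  have h2 := H.comp_hasDerivAt t hcurve
  have he : pdr1 (hfun γ f) (t, b)
      = ((f (t,b) * f (t,b)) • ((1 / (2 * Real.sqrt (γ (t,b)))) • fderiv ℝ γ (t,b))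
        + Real.sqrt (γ (t,b)) • (f (t,b) • fderiv ℝ (⇑f) (t,b) + f (t,b) • fderiv ℝ (⇑f) (t,b)))
          (1, 0) := by
    unfold pdr1; rw [H.fderiv]
  rw [he]
  exact h2

lemma line_hasDerivAt2 (γ : ℝ × ℝ → ℝ) (hγ : ContDiff ℝ 2 γ) (hpos : ∀ y, 0 < γ y)
    (f : SchwartzMap (ℝ × ℝ) ℝ) (a t : ℝ) :
    HasDerivAt (fun s => hfun γ f (a, s)) (pdr2 (hfun γ f) (a, t)) t := by
  have H := h_hasFDerivAt γ hγ hpos f (a, t)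
  have hcurve : HasDerivAt (fun s : ℝ => ((a, s) : ℝ × ℝ)) ((0 : ℝ), (1 : ℝ)) t :=
    HasDerivAt.prodMk (hasDerivAt_const t a) (hasDerivAt_id t)
  have h2 := H.comp_hasDerivAt t hcurve
  have he : pdr2 (hfun γ f) (a, t)
      = ((f (a,t) * f (a,t)) • ((1 / (2 * Real.sqrt (γ (a,t)))) • fderiv ℝ γ (a,t))
        + Real.sqrt (γ (a,t)) • (f (a,t) • fderiv ℝ (⇑f) (a,t) + f (a,t) • fderiv ℝ (⇑f) (a,t)))
          (0, 1) := by
    unfold pdr2; rw [H.fderiv]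
  rw [he]
  exact h2

lemma good_pdr1_abs {K : ℝ} {γ : ℝ × ℝ → ℝ} (hγ : IsGoodWeight K γ) (p : ℝ × ℝ) :
    |pdr1 γ p| ≤ K * γ p := by
  have h1 : |pdr1 γ p| = Real.sqrt ((pdr1 γ p) ^ 2) := (Real.sqrt_sq_eq_abs _).symm
  rw [h1]
  exact (Real.sqrt_le_sqrt (by nlinarith [sq_nonneg (pdr2 γ p)])).trans (hγ.grad_le p)

lemma good_pdr2_abs {K : ℝ} {γ : ℝ × ℝ → ℝ} (hγ : IsGoodWeight K γ) (p : ℝ × ℝ) :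
    |pdr2 γ p| ≤ K * γ p := by
  have h1 : |pdr2 γ p| = Real.sqrt ((pdr2 γ p) ^ 2) := (Real.sqrt_sq_eq_abs _).symm
  rw [h1]
  exact (Real.sqrt_le_sqrt (by nlinarith [sq_nonneg (pdr1 γ p)])).trans (hγ.grad_le p)

lemma deriv_term_bound {K w d f pf : ℝ} (hw : 0 < w)
    (hd : |d| ≤ K * (w * w)) :
    |(f * f) * ((1 / (2 * w)) * d) + w * (f * pf + f * pf)|
      ≤ |f| * ((2 * |pf| + (K / 2) * |f|) * w) := by
  have habs : |(f * f) * ((1 / (2 * w)) * d)| ≤ (K / 2) * (f * f) * w := by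
    rw [abs_mul, abs_mul, abs_mul]
    have h1 : |1 / (2 * w)| = 1 / (2 * w) := abs_of_pos (by positivity)
    rw [h1]
    have hff : f * f = |f| * |f| := (abs_mul_abs_self f).symm
    rw [hff]
    have hfn : (0:ℝ) ≤ |f| := abs_nonneg f
    have : 1 / (2 * w) * |d| ≤ (K / 2) * w := by
      rw [div_mul_eq_mul_div, one_mul]
      rw [div_le_iff₀ (by positivity)]
      calc |d| ≤ K * (w * w) := hd
        _ = K / 2 * w * (2 * w) := by ring
    nlinarith
  have habs2 : |w * (f * pf + f * pf)| ≤ w * (2 * |f| * |pf|) := by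
    rw [abs_mul, abs_of_pos hw]
    have : |f * pf + f * pf| ≤ 2 * |f| * |pf| := by
      rw [show f * pf + f * pf = 2 * (f * pf) by ring, abs_mul, abs_mul]
      simp [abs_two, mul_assoc]
    nlinarith
  calc |(f * f) * ((1 / (2 * w)) * d) + w * (f * pf + f * pf)|
      ≤ |(f * f) * ((1 / (2 * w)) * d)| + |w * (f * pf + f * pf)| := abs_add_le _ _
    _ ≤ (K / 2) * (f * f) * w + w * (2 * |f| * |pf|) := add_le_add habs habs2
    _ = |f| * ((2 * |pf| + (K / 2) * |f|) * w) := by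
        have : f * f = |f| * |f| := (abs_mul_abs_self f).symm
        rw [this]; ring

lemma pdr1_hfun_cont (γ : ℝ × ℝ → ℝ) (hγ : ContDiff ℝ 2 γ) (hpos : ∀ y, 0 < γ y)
    (f : SchwartzMap (ℝ × ℝ) ℝ) : Continuous (pdr1 (hfun γ f)) := by
  have heq : pdr1 (hfun γ f) = fun p =>
      (f p * f p) * ((1 / (2 * Real.sqrt (γ p))) * pdr1 γ p)
        + Real.sqrt (γ p) * (f p * pdr1 (⇑f) p + f p * pdr1 (⇑f) p) :=
    funext (pdr1_hfun_eq γ hγ hpos f)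
  rw [heq]
  have hwcont : Continuous fun p : ℝ × ℝ => Real.sqrt (γ p) :=
    Real.continuous_sqrt.comp hγ.continuous
  have hinv : Continuous fun p : ℝ × ℝ => 1 / (2 * Real.sqrt (γ p)) := by
    apply continuous_const.div (continuous_const.mul hwcont)
    intro p
    have := Real.sqrt_pos.mpr (hpos p)
    exact mul_ne_zero two_ne_zero this.ne'
  have hp1γ : Continuous (pdr1 γ) :=
    (hγ.continuous_fderiv (by norm_num)).clm_apply continuous_const
  have hp1f : Continuous (pdr1 (⇑f)) :=
    ((f.smooth ⊤).continuous_fderiv (by simp)).clm_apply continuous_const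
  exact ((f.continuous.mul f.continuous).mul (hinv.mul hp1γ)).add
    (hwcont.mul ((f.continuous.mul hp1f).add (f.continuous.mul hp1f)))

lemma pdr2_hfun_cont (γ : ℝ × ℝ → ℝ) (hγ : ContDiff ℝ 2 γ) (hpos : ∀ y, 0 < γ y)
    (f : SchwartzMap (ℝ × ℝ) ℝ) : Continuous (pdr2 (hfun γ f)) := by
  have heq : pdr2 (hfun γ f) = fun p =>
      (f p * f p) * ((1 / (2 * Real.sqrt (γ p))) * pdr2 γ p)
        + Real.sqrt (γ p) * (f p * pdr2 (⇑f) p + f p * pdr2 (⇑f) p) :=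
    funext (pdr2_hfun_eq γ hγ hpos f)
  rw [heq]
  have hwcont : Continuous fun p : ℝ × ℝ => Real.sqrt (γ p) :=
    Real.continuous_sqrt.comp hγ.continuous
  have hinv : Continuous fun p : ℝ × ℝ => 1 / (2 * Real.sqrt (γ p)) := by
    apply continuous_const.div (continuous_const.mul hwcont)
    intro p
    have := Real.sqrt_pos.mpr (hpos p)
    exact mul_ne_zero two_ne_zero this.ne'
  have hp2γ : Continuous (pdr2 γ) :=
    (hγ.continuous_fderiv (by norm_num)).clm_apply continuous_const
  have hp2f : Continuous (pdr2 (⇑f)) :=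
    ((f.smooth ⊤).continuous_fderiv (by simp)).clm_apply continuous_const
  exact ((f.continuous.mul f.continuous).mul (hinv.mul hp2γ)).add
    (hwcont.mul ((f.continuous.mul hp2f).add (f.continuous.mul hp2f)))

lemma pdr1_hfun_bound {K : ℝ} {γ : ℝ × ℝ → ℝ} (hγ : IsGoodWeight K γ)
    (f : SchwartzMap (ℝ × ℝ) ℝ) (p : ℝ × ℝ) :
    |pdr1 (hfun γ f) p|
      ≤ |f p| * ((2 * |pdr1 (⇑f) p| + (K / 2) * |f p|) * Real.sqrt (γ p)) := by
  rw [pdr1_hfun_eq γ hγ.contDiff hγ.pos f p]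
  refine deriv_term_bound (Real.sqrt_pos.mpr (hγ.pos p)) ?_
  rw [Real.mul_self_sqrt (hγ.pos p).le]
  exact good_pdr1_abs hγ p

lemma pdr2_hfun_bound {K : ℝ} {γ : ℝ × ℝ → ℝ} (hγ : IsGoodWeight K γ)
    (f : SchwartzMap (ℝ × ℝ) ℝ) (p : ℝ × ℝ) :
    |pdr2 (hfun γ f) p|
      ≤ |f p| * ((2 * |pdr2 (⇑f) p| + (K / 2) * |f p|) * Real.sqrt (γ p)) := by
  rw [pdr2_hfun_eq γ hγ.contDiff hγ.pos f p]
  refine deriv_term_bound (Real.sqrt_pos.mpr (hγ.pos p)) ?_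
  rw [Real.mul_self_sqrt (hγ.pos p).le]
  exact good_pdr2_abs hγ p

lemma eLpNorm_schwartz_eq (f : SchwartzMap (ℝ × ℝ) ℝ) :
    eLpNorm (⇑f) 2 volume = (∫⁻ y, ENNReal.ofReal (f y ^ 2)) ^ ((1:ℝ)/2) := by
  rw [eLpNorm_eq_lintegral_rpow_enorm_toReal (by norm_num) (by norm_num)]
  have ht : (2 : ℝ≥0∞).toReal = 2 := by simp
  rw [ht]
  congr 1
  refine lintegral_congr fun y => ?_
  rw [← ofReal_norm,
    ENNReal.ofReal_rpow_of_nonneg (norm_nonneg _) (by norm_num)]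
  congr 1
  rw [show ((2:ℝ)) = ((2:ℕ):ℝ) by norm_num, Real.rpow_natCast, Real.norm_eq_abs, sq_abs]

lemma schwartz_sq_integrable (f : SchwartzMap (ℝ × ℝ) ℝ) :
    Integrable (fun y => f y ^ 2) (volume : Measure (ℝ × ℝ)) := by
  obtain ⟨Cb, hCb_pos, hCb⟩ := f.decay 0 0
  have hb : ∀ y, ‖f y‖ ≤ Cb := by
    intro y
    have := hCb y
    simpa [norm_iteratedFDeriv_zero] using this
  have hint : Integrable (fun y => Cb * ‖f y‖) (volume : Measure (ℝ × ℝ)) :=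
    (f.integrable (μ := volume)).norm.const_mul Cb
  refine hint.mono ((f.continuous.pow 2).aestronglyMeasurable) ?_
  refine ae_of_all _ fun y => ?_
  have h1 : ‖f y ^ 2‖ = ‖f y‖ * ‖f y‖ := by
    rw [norm_pow]; ring
  rw [h1]
  have h2 : ‖Cb * ‖f y‖‖ = Cb * ‖f y‖ := by
    rw [norm_mul, Real.norm_eq_abs, abs_of_pos hCb_pos, norm_norm]
  rw [h2]
  exact mul_le_mul_of_nonneg_right (hb y) (norm_nonneg _)

lemma N2_ne_top (f : SchwartzMap (ℝ × ℝ) ℝ) :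
    (∫⁻ y, ENNReal.ofReal (f y ^ 2)) ≠ ⊤ := by
  have h := (schwartz_sq_integrable f).2
  rw [hasFiniteIntegral_iff_norm] at h
  have : ∀ y : ℝ × ℝ, ENNReal.ofReal (f y ^ 2) = ENNReal.ofReal ‖f y ^ 2‖ := by
    intro y
    rw [Real.norm_eq_abs, abs_of_nonneg (sq_nonneg _)]
  rw [lintegral_congr this]
  exact h.ne

/-- weighted 2D Gagliardo–Nirenberg estimate
`(∫ f⁴ γ)^{1/2} ≤ C ‖f‖_{L²} (∫ (|∇f|² + f²) γ)^{1/2}`. -/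
theorem stmt15 (K : ℝ) (hK : 0 < K) :
    ∃ C : ℝ, 0 < C ∧ ∀ γ : ℝ × ℝ → ℝ, IsGoodWeight K γ →
      ∀ f : SchwartzMap (ℝ × ℝ) ℝ,
        (∫⁻ y : ℝ × ℝ, ENNReal.ofReal (f y ^ 4 * γ y)) ^ ((1:ℝ)/2)
          ≤ ENNReal.ofReal C * eLpNorm (⇑f) 2 volume *
              (∫⁻ y : ℝ × ℝ,
                  ENNReal.ofReal
                    (((pdr1 ⇑f y) ^ 2 + (pdr2 ⇑f y) ^ 2 + f y ^ 2) * γ y)) ^ ((1:ℝ)/2) := by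
  refine ⟨K + 4, by positivity, ?_⟩
  intro γ hγ f
  have hγpos := hγ.pos
  have hγc : Continuous γ := hγ.contDiff.continuous
  have hfc : Continuous (⇑f) := f.continuous
  have hwcont : Continuous fun p : ℝ × ℝ => Real.sqrt (γ p) :=
    Real.continuous_sqrt.comp hγc
  have hp1f : Continuous (pdr1 (⇑f)) :=
    ((f.smooth ⊤).continuous_fderiv (by simp)).clm_apply continuous_const
  have hp2f : Continuous (pdr2 (⇑f)) :=
    ((f.smooth ⊤).continuous_fderiv (by simp)).clm_apply continuous_const
  -- Case: f ≡ 0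
  by_cases hN0 : eLpNorm (⇑f) 2 volume = 0
  · have hf0 : (⇑f) = (0 : ℝ × ℝ → ℝ) :=
      (Continuous.ae_eq_iff_eq volume hfc continuous_const).mp
        ((eLpNorm_eq_zero_iff hfc.aestronglyMeasurable (by norm_num)).mp hN0)
    have hfy : ∀ y : ℝ × ℝ, f y = 0 := fun y => congrFun hf0 y
    have hz : (∫⁻ y : ℝ × ℝ, ENNReal.ofReal (f y ^ 4 * γ y)) = 0 := by
      simp [hfy]
    rw [hz, ENNReal.zero_rpow_of_pos (by norm_num)]
    exact zero_le
  -- Case: the weighted H¹ integral is infinite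
  by_cases hAtop : (∫⁻ y : ℝ × ℝ,
      ENNReal.ofReal (((pdr1 (⇑f) y) ^ 2 + (pdr2 (⇑f) y) ^ 2 + f y ^ 2) * γ y)) = ⊤
  · rw [hAtop, ENNReal.top_rpow_of_pos (by norm_num), ENNReal.mul_top]
    · exact le_top
    · exact mul_ne_zero (ENNReal.ofReal_pos.mpr (by linarith)).ne' hN0
  -- Main case
  have hhcont : Continuous (hfun γ f) := hfun_continuous γ hγ.contDiff f
  have hp1h : Continuous (pdr1 (hfun γ f)) := pdr1_hfun_cont γ hγ.contDiff hγpos f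
  have hp2h : Continuous (pdr2 (hfun γ f)) := pdr2_hfun_cont γ hγ.contDiff hγpos f
  have hφ1 : Measurable fun z : ℝ × ℝ => ENNReal.ofReal |pdr1 (hfun γ f) z| :=
    hp1h.abs.measurable.ennreal_ofReal
  have hφ2 : Measurable fun z : ℝ × ℝ => ENNReal.ofReal |pdr2 (hfun γ f) z| :=
    hp2h.abs.measurable.ennreal_ofReal
  have hφh : Measurable fun z : ℝ × ℝ => ENNReal.ofReal (hfun γ f z) :=
    hhcont.measurable.ennreal_ofReal
  -- pointwise domination of weighted square integrals by A
  have hI1 : (∫⁻ z : ℝ × ℝ,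
      ENNReal.ofReal (((2 * |pdr1 (⇑f) z| + (K / 2) * |f z|) * Real.sqrt (γ z)) ^ 2))
      ≤ ENNReal.ofReal (8 + K ^ 2) *
        (∫⁻ y : ℝ × ℝ,
          ENNReal.ofReal (((pdr1 (⇑f) y) ^ 2 + (pdr2 (⇑f) y) ^ 2 + f y ^ 2) * γ y)) := by
    have hpt : ∀ z : ℝ × ℝ, ((2 * |pdr1 (⇑f) z| + (K / 2) * |f z|) * Real.sqrt (γ z)) ^ 2
        ≤ (8 + K ^ 2) * (((pdr1 (⇑f) z) ^ 2 + (pdr2 (⇑f) z) ^ 2 + f z ^ 2) * γ z) := by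
      intro z
      have hwsq : Real.sqrt (γ z) ^ 2 = γ z := Real.sq_sqrt (hγpos z).le
      rw [mul_pow, hwsq]
      have hsc : (2 * |pdr1 (⇑f) z| + (K / 2) * |f z|) ^ 2
          ≤ (8 + K ^ 2) * ((pdr1 (⇑f) z) ^ 2 + (pdr2 (⇑f) z) ^ 2 + f z ^ 2) := by
        nlinarith [sq_nonneg (2 * |pdr1 (⇑f) z| - (K / 2) * |f z|), sq_nonneg (pdr2 (⇑f) z),
          sq_abs (pdr1 (⇑f) z), sq_abs (f z), sq_nonneg (K * |f z|),
          abs_nonneg (pdr1 (⇑f) z), abs_nonneg (f z), sq_nonneg K, sq_nonneg (pdr1 (⇑f) z),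
          sq_nonneg (f z)]
      nlinarith [mul_le_mul_of_nonneg_right hsc (hγpos z).le]
    calc (∫⁻ z : ℝ × ℝ,
        ENNReal.ofReal (((2 * |pdr1 (⇑f) z| + (K / 2) * |f z|) * Real.sqrt (γ z)) ^ 2))
        ≤ ∫⁻ z : ℝ × ℝ, ENNReal.ofReal
            ((8 + K ^ 2) * (((pdr1 (⇑f) z) ^ 2 + (pdr2 (⇑f) z) ^ 2 + f z ^ 2) * γ z)) :=
          lintegral_mono fun z => ENNReal.ofReal_le_ofReal (hpt z)
      _ = _ := by
          simp_rw [ENNReal.ofReal_mul (by positivity : (0:ℝ) ≤ 8 + K ^ 2)]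
          rw [lintegral_const_mul' _ _ ENNReal.ofReal_ne_top]
  have hI2 : (∫⁻ z : ℝ × ℝ,
      ENNReal.ofReal (((2 * |pdr2 (⇑f) z| + (K / 2) * |f z|) * Real.sqrt (γ z)) ^ 2))
      ≤ ENNReal.ofReal (8 + K ^ 2) *
        (∫⁻ y : ℝ × ℝ,
          ENNReal.ofReal (((pdr1 (⇑f) y) ^ 2 + (pdr2 (⇑f) y) ^ 2 + f y ^ 2) * γ y)) := by
    have hpt : ∀ z : ℝ × ℝ, ((2 * |pdr2 (⇑f) z| + (K / 2) * |f z|) * Real.sqrt (γ z)) ^ 2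
        ≤ (8 + K ^ 2) * (((pdr1 (⇑f) z) ^ 2 + (pdr2 (⇑f) z) ^ 2 + f z ^ 2) * γ z) := by
      intro z
      have hwsq : Real.sqrt (γ z) ^ 2 = γ z := Real.sq_sqrt (hγpos z).le
      rw [mul_pow, hwsq]
      have hsc : (2 * |pdr2 (⇑f) z| + (K / 2) * |f z|) ^ 2
          ≤ (8 + K ^ 2) * ((pdr1 (⇑f) z) ^ 2 + (pdr2 (⇑f) z) ^ 2 + f z ^ 2) := by
        nlinarith [sq_nonneg (2 * |pdr2 (⇑f) z| - (K / 2) * |f z|), sq_nonneg (pdr1 (⇑f) z),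
          sq_abs (pdr2 (⇑f) z), sq_abs (f z), sq_nonneg (K * |f z|),
          abs_nonneg (pdr2 (⇑f) z), abs_nonneg (f z), sq_nonneg K, sq_nonneg (pdr2 (⇑f) z),
          sq_nonneg (f z)]
      nlinarith [mul_le_mul_of_nonneg_right hsc (hγpos z).le]
    calc (∫⁻ z : ℝ × ℝ,
        ENNReal.ofReal (((2 * |pdr2 (⇑f) z| + (K / 2) * |f z|) * Real.sqrt (γ z)) ^ 2))
        ≤ ∫⁻ z : ℝ × ℝ, ENNReal.ofReal
            ((8 + K ^ 2) * (((pdr1 (⇑f) z) ^ 2 + (pdr2 (⇑f) z) ^ 2 + f z ^ 2) * γ z)) :=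
          lintegral_mono fun z => ENNReal.ofReal_le_ofReal (hpt z)
      _ = _ := by
          simp_rw [ENNReal.ofReal_mul (by positivity : (0:ℝ) ≤ 8 + K ^ 2)]
          rw [lintegral_const_mul' _ _ ENNReal.ofReal_ne_top]
  have hIA : (∫⁻ z : ℝ × ℝ, ENNReal.ofReal ((|f z| * Real.sqrt (γ z)) ^ 2))
      ≤ ∫⁻ y : ℝ × ℝ,
          ENNReal.ofReal (((pdr1 (⇑f) y) ^ 2 + (pdr2 (⇑f) y) ^ 2 + f y ^ 2) * γ y) := by
    refine lintegral_mono fun z => ENNReal.ofReal_le_ofReal ?_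
    rw [mul_pow, sq_abs, Real.sq_sqrt (hγpos z).le]
    nlinarith [mul_nonneg (by positivity : (0:ℝ) ≤ (pdr1 (⇑f) z) ^ 2 + (pdr2 (⇑f) z) ^ 2)
      (hγpos z).le]
  -- Cauchy–Schwarz bounds
  have hv1m : Measurable fun z : ℝ × ℝ =>
      (2 * |pdr1 (⇑f) z| + (K / 2) * |f z|) * Real.sqrt (γ z) :=
    (((continuous_const.mul hp1f.abs).add (continuous_const.mul hfc.abs)).mul hwcont).measurable
  have hv2m : Measurable fun z : ℝ × ℝ =>
      (2 * |pdr2 (⇑f) z| + (K / 2) * |f z|) * Real.sqrt (γ z) :=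
    (((continuous_const.mul hp2f.abs).add (continuous_const.mul hfc.abs)).mul hwcont).measurable
  have hfsq : (∫⁻ z : ℝ × ℝ, ENNReal.ofReal (|f z| ^ 2))
      = ∫⁻ y : ℝ × ℝ, ENNReal.ofReal (f y ^ 2) :=
    lintegral_congr fun z => by rw [sq_abs]
  have hB1 : (∫⁻ z : ℝ × ℝ, ENNReal.ofReal |pdr1 (hfun γ f) z|)
      ≤ (∫⁻ y : ℝ × ℝ, ENNReal.ofReal (f y ^ 2)) ^ ((1:ℝ)/2) *
        (ENNReal.ofReal (8 + K ^ 2) *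
          (∫⁻ y : ℝ × ℝ,
            ENNReal.ofReal (((pdr1 (⇑f) y) ^ 2 + (pdr2 (⇑f) y) ^ 2 + f y ^ 2) * γ y)))
              ^ ((1:ℝ)/2) := by
    have step0 : (∫⁻ z : ℝ × ℝ, ENNReal.ofReal |pdr1 (hfun γ f) z|)
        ≤ ∫⁻ z : ℝ × ℝ, ENNReal.ofReal
            (|f z| * ((2 * |pdr1 (⇑f) z| + (K / 2) * |f z|) * Real.sqrt (γ z))) :=
      lintegral_mono fun z => ENNReal.ofReal_le_ofReal (pdr1_hfun_bound hγ f z)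
    have step1 := lintegral_cs volume hfc.abs.measurable hv1m
    refine step0.trans (step1.trans ?_)
    rw [hfsq]
    exact mul_le_mul_right (ENNReal.rpow_le_rpow hI1 (by norm_num)) _
  have hB2 : (∫⁻ z : ℝ × ℝ, ENNReal.ofReal |pdr2 (hfun γ f) z|)
      ≤ (∫⁻ y : ℝ × ℝ, ENNReal.ofReal (f y ^ 2)) ^ ((1:ℝ)/2) *
        (ENNReal.ofReal (8 + K ^ 2) *
          (∫⁻ y : ℝ × ℝ,
            ENNReal.ofReal (((pdr1 (⇑f) y) ^ 2 + (pdr2 (⇑f) y) ^ 2 + f y ^ 2) * γ y)))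
              ^ ((1:ℝ)/2) := by
    have step0 : (∫⁻ z : ℝ × ℝ, ENNReal.ofReal |pdr2 (hfun γ f) z|)
        ≤ ∫⁻ z : ℝ × ℝ, ENNReal.ofReal
            (|f z| * ((2 * |pdr2 (⇑f) z| + (K / 2) * |f z|) * Real.sqrt (γ z))) :=
      lintegral_mono fun z => ENNReal.ofReal_le_ofReal (pdr2_hfun_bound hγ f z)
    have step1 := lintegral_cs volume hfc.abs.measurable hv2m
    refine step0.trans (step1.trans ?_)
    rw [hfsq]
    exact mul_le_mul_right (ENNReal.rpow_le_rpow hI2 (by norm_num)) _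
  have hBh : (∫⁻ z : ℝ × ℝ, ENNReal.ofReal (hfun γ f z))
      ≤ (∫⁻ y : ℝ × ℝ, ENNReal.ofReal (f y ^ 2)) ^ ((1:ℝ)/2) *
        (∫⁻ y : ℝ × ℝ,
          ENNReal.ofReal (((pdr1 (⇑f) y) ^ 2 + (pdr2 (⇑f) y) ^ 2 + f y ^ 2) * γ y))
            ^ ((1:ℝ)/2) := by
    have heq : ∀ z : ℝ × ℝ, hfun γ f z = |f z| * (|f z| * Real.sqrt (γ z)) := by
      intro z
      unfold hfun
      rw [← abs_mul_abs_self (f z)]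
      ring
    have step0 : (∫⁻ z : ℝ × ℝ, ENNReal.ofReal (hfun γ f z))
        = ∫⁻ z : ℝ × ℝ, ENNReal.ofReal (|f z| * (|f z| * Real.sqrt (γ z))) :=
      lintegral_congr fun z => by rw [heq z]
    have step1 := lintegral_cs volume hfc.abs.measurable (hfc.abs.mul hwcont).measurable
    rw [step0]
    refine step1.trans ?_
    rw [hfsq]
    exact mul_le_mul_right (ENNReal.rpow_le_rpow hIA (by norm_num)) _
  have hBh_fin : (∫⁻ z : ℝ × ℝ, ENNReal.ofReal (hfun γ f z)) ≠ ⊤ :=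
    ne_top_of_le_ne_top
      (ENNReal.mul_ne_top (ENNReal.rpow_ne_top_of_nonneg (by norm_num) (N2_ne_top f))
        (ENNReal.rpow_ne_top_of_nonneg (by norm_num) hAtop)) hBh
  -- a.e. slice bounds via the fundamental theorem of calculus
  have hslice_b : ∀ᵐ b : ℝ, (∫⁻ t, ENNReal.ofReal (hfun γ f (t, b))) < ⊤ := by
    apply ae_lt_top (Measurable.lintegral_prod_left' hφh)
    have he : (∫⁻ b : ℝ, ∫⁻ t : ℝ, ENNReal.ofReal (hfun γ f (t, b)))
        = ∫⁻ z : ℝ × ℝ, ENNReal.ofReal (hfun γ f z) := by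
      rw [Measure.volume_eq_prod]
      exact (lintegral_prod_symm' _ hφh).symm
    rw [he]
    exact hBh_fin
  have hslice_a : ∀ᵐ a : ℝ, (∫⁻ s, ENNReal.ofReal (hfun γ f (a, s))) < ⊤ := by
    apply ae_lt_top (Measurable.lintegral_prod_right' hφh)
    have he : (∫⁻ a : ℝ, ∫⁻ s : ℝ, ENNReal.ofReal (hfun γ f (a, s)))
        = ∫⁻ z : ℝ × ℝ, ENNReal.ofReal (hfun γ f z) := by
      rw [Measure.volume_eq_prod]
      exact (lintegral_prod _ hφh.aemeasurable).symm
    rw [he]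
    exact hBh_fin
  have key_b : ∀ᵐ b : ℝ, ∀ a : ℝ, ENNReal.ofReal (hfun γ f (a, b))
      ≤ ∫⁻ t, ENNReal.ofReal |pdr1 (hfun γ f) (t, b)| := by
    filter_upwards [hslice_b] with b hb a
    by_cases hFb : (∫⁻ t, ENNReal.ofReal |pdr1 (hfun γ f) (t, b)|) = ⊤
    · rw [hFb]; exact le_top
    have hd : ∀ t, HasDerivAt (fun s => hfun γ f (s, b)) (pdr1 (hfun γ f) (t, b)) t :=
      fun t => line_hasDerivAt1 γ hγ.contDiff hγpos f b t
    have hg'c : Continuous fun t => pdr1 (hfun γ f) (t, b) :=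
      hp1h.comp (continuous_id.prodMk continuous_const)
    have hgc : Continuous fun t => hfun γ f (t, b) :=
      hhcont.comp (continuous_id.prodMk continuous_const)
    have hg'i : Integrable (fun t => pdr1 (hfun γ f) (t, b)) := by
      refine ⟨hg'c.aestronglyMeasurable, ?_⟩
      rw [hasFiniteIntegral_iff_norm]
      have he : ∀ t : ℝ, ENNReal.ofReal ‖pdr1 (hfun γ f) (t, b)‖
          = ENNReal.ofReal |pdr1 (hfun γ f) (t, b)| := fun t => by rw [Real.norm_eq_abs]
      rw [lintegral_congr he]
      exact lt_top_iff_ne_top.mpr hFb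
    have hgi : Integrable (fun t => hfun γ f (t, b)) := by
      refine ⟨hgc.aestronglyMeasurable, ?_⟩
      rw [hasFiniteIntegral_iff_norm]
      have he : ∀ t : ℝ, ENNReal.ofReal ‖hfun γ f (t, b)‖
          = ENNReal.ofReal (hfun γ f (t, b)) := fun t => by
        rw [Real.norm_eq_abs, abs_of_nonneg (hfun_nonneg γ f _)]
      rw [lintegral_congr he]
      exact hb
    have hle := line_bound hd hgi hg'i a
    calc ENNReal.ofReal (hfun γ f (a, b))
        ≤ ENNReal.ofReal (∫ t, |pdr1 (hfun γ f) (t, b)|) := ENNReal.ofReal_le_ofReal hle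
      _ = ∫⁻ t, ENNReal.ofReal |pdr1 (hfun γ f) (t, b)| :=
          ofReal_integral_eq_lintegral_ofReal hg'i.abs (ae_of_all _ fun t => abs_nonneg _)
  have key_a : ∀ᵐ a : ℝ, ∀ s : ℝ, ENNReal.ofReal (hfun γ f (a, s))
      ≤ ∫⁻ u, ENNReal.ofReal |pdr2 (hfun γ f) (a, u)| := by
    filter_upwards [hslice_a] with a ha s
    by_cases hGa : (∫⁻ u, ENNReal.ofReal |pdr2 (hfun γ f) (a, u)|) = ⊤
    · rw [hGa]; exact le_top
    have hd : ∀ t, HasDerivAt (fun s => hfun γ f (a, s)) (pdr2 (hfun γ f) (a, t)) t :=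
      fun t => line_hasDerivAt2 γ hγ.contDiff hγpos f a t
    have hg'c : Continuous fun t => pdr2 (hfun γ f) (a, t) :=
      hp2h.comp (continuous_const.prodMk continuous_id)
    have hgc : Continuous fun t => hfun γ f (a, t) :=
      hhcont.comp (continuous_const.prodMk continuous_id)
    have hg'i : Integrable (fun t => pdr2 (hfun γ f) (a, t)) := by
      refine ⟨hg'c.aestronglyMeasurable, ?_⟩
      rw [hasFiniteIntegral_iff_norm]
      have he : ∀ t : ℝ, ENNReal.ofReal ‖pdr2 (hfun γ f) (a, t)‖
          = ENNReal.ofReal |pdr2 (hfun γ f) (a, t)| := fun t => by rw [Real.norm_eq_abs]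
      rw [lintegral_congr he]
      exact lt_top_iff_ne_top.mpr hGa
    have hgi : Integrable (fun t => hfun γ f (a, t)) := by
      refine ⟨hgc.aestronglyMeasurable, ?_⟩
      rw [hasFiniteIntegral_iff_norm]
      have he : ∀ t : ℝ, ENNReal.ofReal ‖hfun γ f (a, t)‖
          = ENNReal.ofReal (hfun γ f (a, t)) := fun t => by
        rw [Real.norm_eq_abs, abs_of_nonneg (hfun_nonneg γ f _)]
      rw [lintegral_congr he]
      exact ha
    have hle := line_bound hd hgi hg'i s
    calc ENNReal.ofReal (hfun γ f (a, s))
        ≤ ENNReal.ofReal (∫ t, |pdr2 (hfun γ f) (a, t)|) := ENNReal.ofReal_le_ofReal hle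
      _ = ∫⁻ t, ENNReal.ofReal |pdr2 (hfun γ f) (a, t)| :=
          ofReal_integral_eq_lintegral_ofReal hg'i.abs (ae_of_all _ fun t => abs_nonneg _)
  -- lift the slice bounds to the product space
  have hqsnd : MeasureTheory.Measure.QuasiMeasurePreserving (Prod.snd : ℝ × ℝ → ℝ)
      volume volume := by
    rw [Measure.volume_eq_prod]
    exact Measure.quasiMeasurePreserving_snd
  have hqfst : MeasureTheory.Measure.QuasiMeasurePreserving (Prod.fst : ℝ × ℝ → ℝ)
      volume volume := by
    rw [Measure.volume_eq_prod]
    exact Measure.quasiMeasurePreserving_fst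
  have keyB : ∀ᵐ z : ℝ × ℝ, ENNReal.ofReal (hfun γ f z)
      ≤ ∫⁻ t, ENNReal.ofReal |pdr1 (hfun γ f) (t, z.2)| := by
    filter_upwards [hqsnd.tendsto_ae.eventually key_b] with z hz
    have h1 := hz z.1
    rwa [Prod.mk.eta] at h1
  have keyA : ∀ᵐ z : ℝ × ℝ, ENNReal.ofReal (hfun γ f z)
      ≤ ∫⁻ u, ENNReal.ofReal |pdr2 (hfun γ f) (z.1, u)| := by
    filter_upwards [hqfst.tendsto_ae.eventually key_a] with z hz
    have h1 := hz z.2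
    rwa [Prod.mk.eta] at h1
  have hprod : ∀ᵐ z : ℝ × ℝ, ENNReal.ofReal (f z ^ 4 * γ z)
      ≤ (∫⁻ u, ENNReal.ofReal |pdr2 (hfun γ f) (z.1, u)|) *
        (∫⁻ t, ENNReal.ofReal |pdr1 (hfun γ f) (t, z.2)|) := by
    filter_upwards [keyA, keyB] with z h1 h2
    rw [hfun_sq γ hγpos f z, ENNReal.ofReal_mul (hfun_nonneg γ f z)]
    exact mul_le_mul' h1 h2
  -- Fubini for the product of the two slice integrals
  have hGmeas : Measurable fun a : ℝ => ∫⁻ u, ENNReal.ofReal |pdr2 (hfun γ f) (a, u)| :=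
    Measurable.lintegral_prod_right' hφ2
  have hFmeas : Measurable fun b : ℝ => ∫⁻ t, ENNReal.ofReal |pdr1 (hfun γ f) (t, b)| :=
    Measurable.lintegral_prod_left' hφ1
  have hGsum : (∫⁻ a : ℝ, ∫⁻ u, ENNReal.ofReal |pdr2 (hfun γ f) (a, u)|)
      = ∫⁻ z : ℝ × ℝ, ENNReal.ofReal |pdr2 (hfun γ f) z| := by
    rw [Measure.volume_eq_prod]
    exact (lintegral_prod _ hφ2.aemeasurable).symm
  have hFsum : (∫⁻ b : ℝ, ∫⁻ t, ENNReal.ofReal |pdr1 (hfun γ f) (t, b)|)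
      = ∫⁻ z : ℝ × ℝ, ENNReal.ofReal |pdr1 (hfun γ f) z| := by
    rw [Measure.volume_eq_prod]
    exact (lintegral_prod_symm' _ hφ1).symm
  have hmain : (∫⁻ y : ℝ × ℝ, ENNReal.ofReal (f y ^ 4 * γ y))
      ≤ ((∫⁻ y : ℝ × ℝ, ENNReal.ofReal (f y ^ 2)) ^ ((1:ℝ)/2) *
          (ENNReal.ofReal (8 + K ^ 2) *
            (∫⁻ y : ℝ × ℝ,
              ENNReal.ofReal (((pdr1 (⇑f) y) ^ 2 + (pdr2 (⇑f) y) ^ 2 + f y ^ 2) * γ y)))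
                ^ ((1:ℝ)/2)) *
        ((∫⁻ y : ℝ × ℝ, ENNReal.ofReal (f y ^ 2)) ^ ((1:ℝ)/2) *
          (ENNReal.ofReal (8 + K ^ 2) *
            (∫⁻ y : ℝ × ℝ,
              ENNReal.ofReal (((pdr1 (⇑f) y) ^ 2 + (pdr2 (⇑f) y) ^ 2 + f y ^ 2) * γ y)))
                ^ ((1:ℝ)/2)) := by
    calc (∫⁻ y : ℝ × ℝ, ENNReal.ofReal (f y ^ 4 * γ y))
        ≤ ∫⁻ z : ℝ × ℝ, (∫⁻ u, ENNReal.ofReal |pdr2 (hfun γ f) (z.1, u)|) *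
            (∫⁻ t, ENNReal.ofReal |pdr1 (hfun γ f) (t, z.2)|) := lintegral_mono_ae hprod
      _ = (∫⁻ a : ℝ, ∫⁻ u, ENNReal.ofReal |pdr2 (hfun γ f) (a, u)|) *
          (∫⁻ b : ℝ, ∫⁻ t, ENNReal.ofReal |pdr1 (hfun γ f) (t, b)|) := by
          rw [Measure.volume_eq_prod]
          exact lintegral_prod_mul hGmeas.aemeasurable hFmeas.aemeasurable
      _ = (∫⁻ z : ℝ × ℝ, ENNReal.ofReal |pdr2 (hfun γ f) z|) *
          (∫⁻ z : ℝ × ℝ, ENNReal.ofReal |pdr1 (hfun γ f) z|) := by rw [hGsum, hFsum]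
      _ ≤ _ := mul_le_mul' hB2 hB1
  -- conclude
  have hXX : ∀ X : ℝ≥0∞, (X * X) ^ ((1:ℝ)/2) = X := by
    intro X
    rw [← sq, ← ENNReal.rpow_natCast X 2, ← ENNReal.rpow_mul]
    norm_num
  have hL := (ENNReal.rpow_le_rpow hmain (by norm_num : (0:ℝ) ≤ 1/2)).trans_eq (hXX _)
  refine hL.trans ?_
  rw [eLpNorm_schwartz_eq f,
    ENNReal.mul_rpow_of_nonneg _ _ (by norm_num : (0:ℝ) ≤ 1/2)]
  have hc : (ENNReal.ofReal (8 + K ^ 2)) ^ ((1:ℝ)/2) ≤ ENNReal.ofReal (K + 4) := by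
    rw [ENNReal.ofReal_rpow_of_nonneg (by positivity) (by norm_num)]
    apply ENNReal.ofReal_le_ofReal
    rw [← Real.sqrt_eq_rpow]
    calc Real.sqrt (8 + K ^ 2) ≤ Real.sqrt ((K + 4) ^ 2) :=
          Real.sqrt_le_sqrt (by nlinarith)
      _ = K + 4 := Real.sqrt_sq (by positivity)
  calc (∫⁻ y : ℝ × ℝ, ENNReal.ofReal (f y ^ 2)) ^ ((1:ℝ)/2) *
        ((ENNReal.ofReal (8 + K ^ 2)) ^ ((1:ℝ)/2) *
          (∫⁻ y : ℝ × ℝ,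
            ENNReal.ofReal (((pdr1 (⇑f) y) ^ 2 + (pdr2 (⇑f) y) ^ 2 + f y ^ 2) * γ y))
              ^ ((1:ℝ)/2))
      ≤ (∫⁻ y : ℝ × ℝ, ENNReal.ofReal (f y ^ 2)) ^ ((1:ℝ)/2) *
        (ENNReal.ofReal (K + 4) *
          (∫⁻ y : ℝ × ℝ,
            ENNReal.ofReal (((pdr1 (⇑f) y) ^ 2 + (pdr2 (⇑f) y) ^ 2 + f y ^ 2) * γ y))
              ^ ((1:ℝ)/2)) :=
        mul_le_mul_right (mul_le_mul_left hc _) _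
    _ = ENNReal.ofReal (K + 4) *
          (∫⁻ y : ℝ × ℝ, ENNReal.ofReal (f y ^ 2)) ^ ((1:ℝ)/2) *
          (∫⁻ y : ℝ × ℝ,
            ENNReal.ofReal (((pdr1 (⇑f) y) ^ 2 + (pdr2 (⇑f) y) ^ 2 + f y ^ 2) * γ y))
              ^ ((1:ℝ)/2) := by ring
end
end

section
/- For every K > 0 there exists a constant C = C(K) > 0 such that: if γ : ℝ² → (0,∞) is a C² function satisfying |∇γ(y)| ≤ K γ(y) for all y and |∂^β γ(y)| ≤ K γ(y) for all y and all multi-indices β with |β| = 2, then for every Schwartz function f on ℝ²: sup_{y ∈ ℝ²} f(y)² √(γ(y)) ≤ C [ ‖f‖_{L²(ℝ²)} (∫_{ℝ²} |∂²f/∂y₁∂y₂|² γ dy)^{1/2} + ∫_{ℝ²} (|∇f|² + f²) √γ dy ]. -/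
open MeasureTheory Filter Set
open scoped Topology


open MeasureTheory
open scoped ENNReal NNReal

noncomputable section

/-- If an integrable function tends to `L` at `-∞`, then `L = 0`. -/
lemma limit_zero_of_integrable {h : ℝ → ℝ} {L : ℝ}
    (hh : Integrable h volume) (hL : Tendsto h atBot (𝓝 L)) : L = 0 := by
  by_contra hne
  have h2 : |L| / 2 < |L| := by have : 0 < |L| := abs_pos.mpr hne; linarith
  have hev : ∀ᶠ t in atBot, |L| / 2 < |h t| :=
    (hL.abs).eventually (eventually_gt_nhds h2)
  obtain ⟨a, ha⟩ := eventually_atBot.mp hev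
  have hfin : (∫⁻ t, ‖h t‖₊ ∂volume) < ⊤ := hh.2
  have hres : (∫⁻ t in Iic a, ‖h t‖₊ ∂volume) < ⊤ :=
    lt_of_le_of_lt (setLIntegral_le_lintegral _ _) hfin
  have hlow : (∫⁻ t in Iic a, ENNReal.ofReal (|L| / 2) ∂volume)
      ≤ ∫⁻ t in Iic a, ‖h t‖₊ ∂volume := by
    refine setLIntegral_mono_ae (hh.aemeasurable.nnnorm.coe_nnreal_ennreal.restrict) ?_
    · refine Filter.Eventually.of_forall fun t ht => ?_
      have : |L| / 2 ≤ |h t| := (ha t ht).le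
      calc ENNReal.ofReal (|L| / 2) ≤ ENNReal.ofReal (|h t|) := ENNReal.ofReal_le_ofReal this
        _ = ‖h t‖₊ := by rw [← Real.norm_eq_abs, ENNReal.ofReal, Real.toNNReal_eq_nnnorm_of_nonneg (norm_nonneg _)]; simp
  have hconst : (∫⁻ t in Iic a, ENNReal.ofReal (|L| / 2) ∂volume) = ⊤ := by
    rw [setLIntegral_const, Real.volume_Iic]
    rw [ENNReal.mul_top]
    simp only [ne_eq, ENNReal.ofReal_eq_zero, not_le]
    positivity
  rw [hconst, top_le_iff] at hlow
  rw [hlow] at hres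
  exact lt_irrefl _ hres

/-- 1D: if `h` and its derivative `h'` are integrable, then `|h b| ≤ ∫ |h'|`. -/
lemma abs_le_integral_abs_deriv {h h' : ℝ → ℝ}
    (hd : ∀ x, HasDerivAt h (h' x) x)
    (hh : Integrable h volume) (hh' : Integrable h' volume) (b : ℝ) :
    |h b| ≤ ∫ x, |h' x| := by
  have key : ∀ t, h b - h t = ∫ x in t..b, h' x := by
    intro t
    rw [intervalIntegral.integral_eq_sub_of_hasDerivAt (fun x _ => hd x)
      hh'.intervalIntegrable]
  have htend : Tendsto (fun t => ∫ x in t..b, h' x) atBot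
      (𝓝 (∫ x in Iic b, h' x)) :=
    intervalIntegral_tendsto_integral_Iic b (hh'.integrableOn) tendsto_id
  have hht : Tendsto h atBot (𝓝 (h b - ∫ x in Iic b, h' x)) := by
    have : ∀ t, h t = h b - ∫ x in t..b, h' x := fun t => by rw [← key t]; ring
    exact Tendsto.congr (fun t => (this t).symm) (tendsto_const_nhds.sub htend)
  have hL0 : h b - ∫ x in Iic b, h' x = 0 := limit_zero_of_integrable hh hht
  have hb_eq : h b = ∫ x in Iic b, h' x := by linarith
  rw [hb_eq]
  calc |∫ x in Iic b, h' x| ≤ ∫ x in Iic b, |h' x| := by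
        simpa [Real.norm_eq_abs] using
          norm_integral_le_integral_norm (μ := volume.restrict (Iic b)) h'
    _ ≤ ∫ x, |h' x| := by
        refine setIntegral_le_integral hh'.abs ?_
        exact Filter.Eventually.of_forall fun x => abs_nonneg _

/-- Continuity upgrade: a continuous function `≤ M` a.e. is `≤ M` everywhere. -/
lemma le_of_ae_le_continuous {g : ℝ × ℝ → ℝ} {M : ℝ} (hg : Continuous g)
    (h : ∀ᵐ y : ℝ × ℝ, g y ≤ M) : ∀ y, g y ≤ M := by
  by_contra hc
  push_neg at hc
  obtain ⟨y, hy⟩ := hc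
  have hopen : IsOpen {z : ℝ × ℝ | M < g z} := isOpen_lt continuous_const hg
  have hpos : 0 < volume {z : ℝ × ℝ | M < g z} :=
    hopen.measure_pos volume ⟨y, hy⟩
  have hnull : volume {z : ℝ × ℝ | M < g z} = 0 := by
    have := ae_iff.mp h
    simpa [not_le] using this
  rw [hnull] at hpos
  exact lt_irrefl _ hpos

/-- Push an a.e. statement on the first coordinate to the product. -/
lemma ae_prod_of_ae_fst {p : ℝ × ℝ → Prop} (h : ∀ᵐ a : ℝ, ∀ b : ℝ, p (a, b)) :
    ∀ᵐ y : ℝ × ℝ, p y := by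
  rw [MeasureTheory.Measure.volume_eq_prod]
  obtain ⟨N, hNsub, hNmeas, hNnull⟩ :=
    exists_measurable_superset_of_null (ae_iff.mp h)
  rw [ae_iff]
  refine measure_mono_null (t := N ×ˢ (univ : Set ℝ)) (fun z hz => ?_) ?_
  · refine ⟨hNsub ?_, trivial⟩
    simp only [mem_setOf_eq]
    intro hall
    exact hz (hall z.2)
  · rw [Measure.prod_prod, hNnull, zero_mul]

/-- 2D: a nonnegative continuous integrable function with integrable partial
derivative (vertical) and integrable mixed derivative is bounded by `∫ |∂₁∂₂ g|`. -/
lemma sup_le_integral_mixed {g g2 g12 : ℝ × ℝ → ℝ}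
    (hgc : Continuous g) (hg0 : ∀ y, 0 ≤ g y)
    (hd2 : ∀ a b : ℝ, HasDerivAt (fun t => g (a, t)) (g2 (a, b)) b)
    (hd12 : ∀ a b : ℝ, HasDerivAt (fun x => g2 (x, b)) (g12 (a, b)) a)
    (hg : Integrable g volume) (hg2 : Integrable g2 volume)
    (hg12 : Integrable g12 volume) :
    ∀ y, g y ≤ ∫ z : ℝ × ℝ, |g12 z| := by
  rw [MeasureTheory.Measure.volume_eq_prod] at hg hg2 hg12
  set Φ : ℝ → ℝ := fun t => ∫ s : ℝ, |g12 (s, t)| with hΦ_def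
  -- a.e. bound for `g2` in terms of `Φ`
  have hstep1 : ∀ᵐ t : ℝ, ∀ a : ℝ, |g2 (a, t)| ≤ Φ t := by
    filter_upwards [hg2.prod_left_ae, hg12.prod_left_ae] with t h1 h2
    intro a
    exact abs_le_integral_abs_deriv (fun x => hd12 x t) h1 h2 a
  have hΦint : Integrable Φ volume := by
    have := hg12.integral_norm_prod_right
    simpa [Real.norm_eq_abs] using this
  have hΦint_eq : ∫ t, Φ t = ∫ z : ℝ × ℝ, |g12 z| ∂(volume.prod volume) :=
    (MeasureTheory.integral_prod_symm _ hg12.abs).symm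
  -- a.e. (in the first variable) bound for `g`
  have hstep2 : ∀ᵐ a : ℝ, ∀ b : ℝ, g (a, b) ≤ ∫ z : ℝ × ℝ, |g12 z| ∂(volume.prod volume) := by
    filter_upwards [hg.prod_right_ae, hg2.prod_right_ae] with a h1 h2
    intro b
    have hb : |g (a, b)| ≤ ∫ t, |g2 (a, t)| :=
      abs_le_integral_abs_deriv (fun t => hd2 a t) h1 h2 b
    have hmono : ∫ t, |g2 (a, t)| ≤ ∫ t, Φ t := by
      refine integral_mono_ae h2.abs hΦint ?_
      filter_upwards [hstep1] with t ht using ht a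
    calc g (a, b) = |g (a, b)| := (abs_of_nonneg (hg0 _)).symm
      _ ≤ ∫ t, |g2 (a, t)| := hb
      _ ≤ ∫ t, Φ t := hmono
      _ = _ := hΦint_eq
  have hae : ∀ᵐ y : ℝ × ℝ, g y ≤ ∫ z : ℝ × ℝ, |g12 z| ∂(volume.prod volume) :=
    ae_prod_of_ae_fst hstep2
  intro y
  exact le_of_ae_le_continuous hgc hae y

lemma hasDerivAt_fst' {h : ℝ × ℝ → ℝ} (a b : ℝ) (hd : DifferentiableAt ℝ h (a, b)) :
    HasDerivAt (fun x => h (x, b)) (pdr1 h (a, b)) a := by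
  have h1 : HasDerivAt (fun x : ℝ => ((x, b) : ℝ × ℝ)) ((1 : ℝ), (0 : ℝ)) a :=
    (hasDerivAt_id a).prodMk (hasDerivAt_const a b)
  exact hd.hasFDerivAt.comp_hasDerivAt a h1

lemma hasDerivAt_snd' {h : ℝ × ℝ → ℝ} (a b : ℝ) (hd : DifferentiableAt ℝ h (a, b)) :
    HasDerivAt (fun t => h (a, t)) (pdr2 h (a, b)) b := by
  have h1 : HasDerivAt (fun t : ℝ => ((a, t) : ℝ × ℝ)) ((0 : ℝ), (1 : ℝ)) b :=
    (hasDerivAt_const b a).prodMk (hasDerivAt_id b)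
  exact hd.hasFDerivAt.comp_hasDerivAt b h1

lemma contDiff_pdr1 {h : ℝ × ℝ → ℝ} (hh : ContDiff ℝ 2 h) : ContDiff ℝ 1 (pdr1 h) := by
  have hfd : ContDiff ℝ 1 (fderiv ℝ h) := hh.fderiv_right (by norm_num)
  exact hfd.clm_apply contDiff_const

lemma contDiff_pdr2 {h : ℝ × ℝ → ℝ} (hh : ContDiff ℝ 2 h) : ContDiff ℝ 1 (pdr2 h) := by
  have hfd : ContDiff ℝ 1 (fderiv ℝ h) := hh.fderiv_right (by norm_num)
  exact hfd.clm_apply contDiff_const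

/-- Symmetry of second derivatives for `C²` functions. -/
lemma pdr_swap' {h : ℝ × ℝ → ℝ} (hh : ContDiff ℝ 2 h) (y : ℝ × ℝ) :
    pdr1 (pdr2 h) y = pdr2 (pdr1 h) y := by
  have hfd : ContDiff ℝ 1 (fderiv ℝ h) := hh.fderiv_right (by norm_num)
  have hdiff : DifferentiableAt ℝ (fderiv ℝ h) y := (hfd.differentiable (by norm_num)).differentiableAt
  have e1 : pdr1 (pdr2 h) y = (fderiv ℝ (fderiv ℝ h) y (1, 0)) (0, 1) := by
    show fderiv ℝ (fun z => (fderiv ℝ h z) ((0 : ℝ), (1 : ℝ))) y (1, 0) = _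
    rw [fderiv_clm_apply hdiff (differentiableAt_const _)]
    simp
  have e2 : pdr2 (pdr1 h) y = (fderiv ℝ (fderiv ℝ h) y (0, 1)) (1, 0) := by
    show fderiv ℝ (fun z => (fderiv ℝ h z) ((1 : ℝ), (0 : ℝ))) y (0, 1) = _
    rw [fderiv_clm_apply hdiff (differentiableAt_const _)]
    simp
  rw [e1, e2]
  exact (hh.contDiffAt.isSymmSndFDerivAt (by norm_num)) _ _

section Aux

variable {γ F : ℝ × ℝ → ℝ} {K : ℝ}

lemma sqrt_deriv_fst (hγ2 : ContDiff ℝ 2 γ) (hγpos : ∀ y, 0 < γ y) (a b : ℝ) :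
    HasDerivAt (fun x => Real.sqrt (γ (x, b)))
      (pdr1 γ (a, b) / (2 * Real.sqrt (γ (a, b)))) a := by
  have h1 : HasDerivAt (fun x => γ (x, b)) (pdr1 γ (a, b)) a :=
    hasDerivAt_fst' a b ((hγ2.differentiable (by norm_num)).differentiableAt)
  have h2 := (Real.hasDerivAt_sqrt (ne_of_gt (hγpos (a, b)))).comp a h1
  refine h2.congr_deriv ?_
  · field_simp

lemma sqrt_deriv_snd (hγ2 : ContDiff ℝ 2 γ) (hγpos : ∀ y, 0 < γ y) (a b : ℝ) :
    HasDerivAt (fun t => Real.sqrt (γ (a, t)))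
      (pdr2 γ (a, b) / (2 * Real.sqrt (γ (a, b)))) b := by
  have h1 : HasDerivAt (fun t => γ (a, t)) (pdr2 γ (a, b)) b :=
    hasDerivAt_snd' a b ((hγ2.differentiable (by norm_num)).differentiableAt)
  have h2 := (Real.hasDerivAt_sqrt (ne_of_gt (hγpos (a, b)))).comp b h1
  refine h2.congr_deriv ?_
  · field_simp

/-- The explicit vertical derivative of `F² √γ`. -/
def g2W (γ F : ℝ × ℝ → ℝ) : ℝ × ℝ → ℝ := fun y =>
  2 * F y * pdr2 F y * Real.sqrt (γ y) +
    F y ^ 2 * (pdr2 γ y / (2 * Real.sqrt (γ y)))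

/-- The explicit mixed derivative of `F² √γ`. -/
def g12W (γ F : ℝ × ℝ → ℝ) : ℝ × ℝ → ℝ := fun y =>
  (2 * pdr1 F y * pdr2 F y + 2 * F y * pdr1 (pdr2 F) y) * Real.sqrt (γ y) +
    (F y * pdr2 F y * pdr1 γ y + F y * pdr1 F y * pdr2 γ y) / Real.sqrt (γ y) +
    F y ^ 2 * pdr1 (pdr2 γ) y / (2 * Real.sqrt (γ y)) -
    F y ^ 2 * pdr1 γ y * pdr2 γ y / (4 * Real.sqrt (γ y) ^ 3)

/-- The dominating function for `|g12W|`. -/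
def BW (K : ℝ) (γ F : ℝ × ℝ → ℝ) : ℝ × ℝ → ℝ := fun y =>
  2 * |F y| * (|pdr1 (pdr2 F) y| * Real.sqrt (γ y)) +
    (1 + 2 * K + K ^ 2) *
      (((pdr1 F y) ^ 2 + (pdr2 F y) ^ 2 + F y ^ 2) * Real.sqrt (γ y))

lemma hd2W (hγ2 : ContDiff ℝ 2 γ) (hγpos : ∀ y, 0 < γ y) (hF : ContDiff ℝ 3 F)
    (a b : ℝ) :
    HasDerivAt (fun t => F (a, t) ^ 2 * Real.sqrt (γ (a, t))) (g2W γ F (a, b)) b := by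
  have hFd : ∀ y, DifferentiableAt ℝ F y :=
    fun y => (hF.differentiable (by norm_num)).differentiableAt
  have h1 : HasDerivAt (fun t => F (a, t)) (pdr2 F (a, b)) b :=
    hasDerivAt_snd' a b (hFd _)
  have h2 := (h1.pow 2).mul (sqrt_deriv_snd hγ2 hγpos a b)
  refine h2.congr_deriv ?_
  unfold g2W
  simp only [Pi.pow_apply]
  push_cast
  ring

lemma contDiff_pdr1_two (hh : ContDiff ℝ 3 F) : ContDiff ℝ 2 (pdr1 F) := by
  exact (hh.fderiv_right (by norm_num)).clm_apply contDiff_const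

lemma contDiff_pdr2_two (hh : ContDiff ℝ 3 F) : ContDiff ℝ 2 (pdr2 F) := by
  exact (hh.fderiv_right (by norm_num)).clm_apply contDiff_const

lemma continuous_pdr1_pdr2 (hh : ContDiff ℝ 2 F) : Continuous (pdr1 (pdr2 F)) := by
  have h1 : ContDiff ℝ 1 (pdr2 F) := contDiff_pdr2 hh
  exact ((h1.fderiv_right (m := 0) (by norm_num)).clm_apply contDiff_const).continuous

lemma hd12W (hγ2 : ContDiff ℝ 2 γ) (hγpos : ∀ y, 0 < γ y) (hF : ContDiff ℝ 3 F)
    (a b : ℝ) :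
    HasDerivAt (fun x => g2W γ F (x, b)) (g12W γ F (a, b)) a := by
  have hFd : ∀ y, DifferentiableAt ℝ F y :=
    fun y => (hF.differentiable (by norm_num)).differentiableAt
  have hu2d : ∀ y, DifferentiableAt ℝ (pdr2 F) y :=
    fun y => ((contDiff_pdr2_two hF).differentiable (by norm_num)).differentiableAt
  have hp2d : ∀ y, DifferentiableAt ℝ (pdr2 γ) y :=
    fun y => ((contDiff_pdr2 hγ2).differentiable (by norm_num)).differentiableAt
  have hFfst : HasDerivAt (fun x => F (x, b)) (pdr1 F (a, b)) a :=
    hasDerivAt_fst' a b (hFd _)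
  have hu2fst : HasDerivAt (fun x => pdr2 F (x, b)) (pdr1 (pdr2 F) (a, b)) a :=
    hasDerivAt_fst' a b (hu2d _)
  have hp2fst : HasDerivAt (fun x => pdr2 γ (x, b)) (pdr1 (pdr2 γ) (a, b)) a :=
    hasDerivAt_fst' a b (hp2d _)
  have hsfst := sqrt_deriv_fst hγ2 hγpos a b
  have hSpos : 0 < Real.sqrt (γ (a, b)) := Real.sqrt_pos.mpr (hγpos _)
  have h2s : HasDerivAt (fun x => 2 * Real.sqrt (γ (x, b)))
      (2 * (pdr1 γ (a, b) / (2 * Real.sqrt (γ (a, b))))) a := hsfst.const_mul 2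
  have hquot := hp2fst.div h2s (by positivity)
  have hA := (((hFfst.const_mul 2).mul hu2fst).mul hsfst)
  have hB := (hFfst.pow 2).mul hquot
  have h := hA.add hB
  refine h.congr_deriv ?_
  unfold g12W
  simp only [Pi.pow_apply, Pi.mul_apply, Pi.div_apply]
  push_cast
  field_simp
  ring

set_option maxHeartbeats 1000000 in
lemma g12W_abs_le (hK : 0 < K) (hγpos : ∀ y, 0 < γ y)
    (hgrad : ∀ y, Real.sqrt ((pdr1 γ y) ^ 2 + (pdr2 γ y) ^ 2) ≤ K * γ y)
    (hq12 : ∀ y, |pdr1 (pdr2 γ) y| ≤ K * γ y) (y : ℝ × ℝ) :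
    |g12W γ F y| ≤ BW K γ F y := by
  have hS : 0 < Real.sqrt (γ y) := Real.sqrt_pos.mpr (hγpos y)
  have hSγ : Real.sqrt (γ y) ^ 2 = γ y := Real.sq_sqrt (hγpos y).le
  set S := Real.sqrt (γ y) with hS_def
  set u1 := pdr1 F y
  set u2 := pdr2 F y
  set v := pdr1 (pdr2 F) y
  set p1 := pdr1 γ y
  set p2 := pdr2 γ y
  set q := pdr1 (pdr2 γ) y
  have hp1 : |p1| ≤ K * S ^ 2 := by
    rw [hSγ]
    calc |p1| = Real.sqrt (p1 ^ 2) := (Real.sqrt_sq_eq_abs p1).symm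
      _ ≤ Real.sqrt (p1 ^ 2 + p2 ^ 2) := Real.sqrt_le_sqrt (by nlinarith [sq_nonneg p2])
      _ ≤ K * γ y := hgrad y
  have hp2 : |p2| ≤ K * S ^ 2 := by
    rw [hSγ]
    calc |p2| = Real.sqrt (p2 ^ 2) := (Real.sqrt_sq_eq_abs p2).symm
      _ ≤ Real.sqrt (p1 ^ 2 + p2 ^ 2) := Real.sqrt_le_sqrt (by nlinarith [sq_nonneg p1])
      _ ≤ K * γ y := hgrad y
  have hq : |q| ≤ K * S ^ 2 := by rw [hSγ]; exact hq12 y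
  set T1 := (2 * u1 * u2 + 2 * F y * v) * S with hT1
  set T2 := (F y * u2 * p1 + F y * u1 * p2) / S with hT2
  set T3 := F y ^ 2 * q / (2 * S) with hT3
  set T4 := F y ^ 2 * p1 * p2 / (4 * S ^ 3) with hT4
  have hform : g12W γ F y = T1 + T2 + T3 - T4 := by
    rw [hT1, hT2, hT3, hT4]; unfold g12W; ring
  have e0 : |g12W γ F y| ≤ |T1| + |T2| + |T3| + |T4| := by
    rw [hform]
    calc |T1 + T2 + T3 - T4| ≤ |T1 + T2 + T3| + |T4| := abs_sub _ _
      _ ≤ |T1 + T2| + |T3| + |T4| := by gcongr; exact abs_add_le _ _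
      _ ≤ |T1| + |T2| + |T3| + |T4| := by gcongr; exact abs_add_le _ _
  have e1 : |T1| ≤ 2 * |u1| * |u2| * S + 2 * |F y| * (|v| * S) := by
    rw [hT1, abs_mul, abs_of_nonneg hS.le]
    have : |2 * u1 * u2 + 2 * F y * v| ≤ 2 * |u1| * |u2| + 2 * |F y| * |v| := by
      calc |2 * u1 * u2 + 2 * F y * v| ≤ |2 * u1 * u2| + |2 * F y * v| := abs_add_le _ _
        _ = 2 * |u1| * |u2| + 2 * |F y| * |v| := by simp [abs_mul, abs_two]
    nlinarith [mul_le_mul_of_nonneg_right this hS.le]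
  have e2 : |T2| ≤ K * S * (|F y| * |u2|) + K * S * (|F y| * |u1|) := by
    rw [hT2, abs_div, abs_of_nonneg hS.le, div_le_iff₀ hS]
    have h1 : |F y * u2 * p1| ≤ |F y| * |u2| * (K * S ^ 2) := by
      rw [abs_mul, abs_mul]
      exact mul_le_mul_of_nonneg_left hp1
        (mul_nonneg (abs_nonneg _) (abs_nonneg _))
    have h2 : |F y * u1 * p2| ≤ |F y| * |u1| * (K * S ^ 2) := by
      rw [abs_mul, abs_mul]
      exact mul_le_mul_of_nonneg_left hp2
        (mul_nonneg (abs_nonneg _) (abs_nonneg _))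
    calc |F y * u2 * p1 + F y * u1 * p2| ≤ |F y * u2 * p1| + |F y * u1 * p2| := abs_add_le _ _
      _ ≤ |F y| * |u2| * (K * S ^ 2) + |F y| * |u1| * (K * S ^ 2) := add_le_add h1 h2
      _ = (K * S * (|F y| * |u2|) + K * S * (|F y| * |u1|)) * S := by ring
  have e3 : |T3| ≤ K / 2 * F y ^ 2 * S := by
    rw [hT3, abs_div, abs_of_nonneg (by positivity : (0:ℝ) ≤ 2 * S), div_le_iff₀ (by positivity)]
    calc |F y ^ 2 * q| = F y ^ 2 * |q| := by rw [abs_mul, abs_of_nonneg (sq_nonneg _)]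
      _ ≤ F y ^ 2 * (K * S ^ 2) :=
          mul_le_mul_of_nonneg_left hq (sq_nonneg _)
      _ = K / 2 * F y ^ 2 * S * (2 * S) := by ring
  have e4 : |T4| ≤ K ^ 2 / 4 * F y ^ 2 * S := by
    rw [hT4, abs_div, abs_of_nonneg (by positivity : (0:ℝ) ≤ 4 * S ^ 3),
      div_le_iff₀ (by positivity)]
    have h12 : |p1| * |p2| ≤ K * S ^ 2 * (K * S ^ 2) :=
      mul_le_mul hp1 hp2 (abs_nonneg _) (by positivity)
    calc |F y ^ 2 * p1 * p2| = F y ^ 2 * (|p1| * |p2|) := by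
          rw [abs_mul, abs_mul, abs_of_nonneg (sq_nonneg _)]; ring
      _ ≤ F y ^ 2 * (K * S ^ 2 * (K * S ^ 2)) :=
          mul_le_mul_of_nonneg_left h12 (sq_nonneg _)
      _ = K ^ 2 / 4 * F y ^ 2 * S * (4 * S ^ 3) := by ring
  have core : 2 * |u1| * |u2| + (K * (|F y| * |u2|) + K * (|F y| * |u1|)) +
      K / 2 * F y ^ 2 + K ^ 2 / 4 * F y ^ 2 ≤
      (1 + 2 * K + K ^ 2) * (u1 ^ 2 + u2 ^ 2 + F y ^ 2) := by
    nlinarith [sq_nonneg (|u1| - |u2|), sq_nonneg (|F y| - |u1|),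
      sq_nonneg (|F y| - |u2|), sq_abs u1, sq_abs u2, sq_abs (F y),
      hK, mul_nonneg hK.le (sq_nonneg u1), mul_nonneg hK.le (sq_nonneg u2),
      mul_nonneg hK.le (sq_nonneg (F y)),
      mul_nonneg (mul_nonneg hK.le hK.le) (sq_nonneg (F y))]
  have hcore := mul_le_mul_of_nonneg_right core hS.le
  have final : 2 * |u1| * |u2| * S + (K * S * (|F y| * |u2|) + K * S * (|F y| * |u1|)) +
      K / 2 * F y ^ 2 * S + K ^ 2 / 4 * F y ^ 2 * S ≤
      (1 + 2 * K + K ^ 2) * ((u1 ^ 2 + u2 ^ 2 + F y ^ 2) * S) := by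
    nlinarith [hcore]
  show |g12W γ F y| ≤ 2 * |F y| * (|v| * S) + (1 + 2 * K + K ^ 2) *
      ((u1 ^ 2 + u2 ^ 2 + F y ^ 2) * S)
  linarith [e0, e1, e2, e3, e4, final]

lemma g2W_abs_le (hK : 0 < K) (hγpos : ∀ y, 0 < γ y)
    (hgrad : ∀ y, Real.sqrt ((pdr1 γ y) ^ 2 + (pdr2 γ y) ^ 2) ≤ K * γ y) (y : ℝ × ℝ) :
    |g2W γ F y| ≤ (1 + K) *
      (((pdr1 F y) ^ 2 + (pdr2 F y) ^ 2 + F y ^ 2) * Real.sqrt (γ y)) := by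
  have hS : 0 < Real.sqrt (γ y) := Real.sqrt_pos.mpr (hγpos y)
  have hSγ : Real.sqrt (γ y) ^ 2 = γ y := Real.sq_sqrt (hγpos y).le
  set S := Real.sqrt (γ y) with hS_def
  set u1 := pdr1 F y
  set u2 := pdr2 F y
  set p2 := pdr2 γ y
  have hp2 : |p2| ≤ K * S ^ 2 := by
    rw [hSγ]
    calc |p2| = Real.sqrt (p2 ^ 2) := (Real.sqrt_sq_eq_abs p2).symm
      _ ≤ Real.sqrt (pdr1 γ y ^ 2 + p2 ^ 2) :=
          Real.sqrt_le_sqrt (by nlinarith [sq_nonneg (pdr1 γ y)])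
      _ ≤ K * γ y := hgrad y
  have e1 : |2 * F y * u2 * S| ≤ (F y ^ 2 + u2 ^ 2) * S := by
    rw [abs_mul, abs_of_nonneg hS.le]
    refine mul_le_mul_of_nonneg_right ?_ hS.le
    calc |2 * F y * u2| = 2 * |F y| * |u2| := by simp [abs_mul, abs_two]
      _ ≤ F y ^ 2 + u2 ^ 2 := by nlinarith [sq_nonneg (|F y| - |u2|), sq_abs (F y), sq_abs u2]
  have e2 : |F y ^ 2 * (p2 / (2 * S))| ≤ K / 2 * F y ^ 2 * S := by
    rw [abs_mul, abs_of_nonneg (sq_nonneg _), abs_div,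
      abs_of_nonneg (by positivity : (0:ℝ) ≤ 2 * S)]
    rw [mul_div_assoc'] at *
    rw [div_le_iff₀ (by positivity)]
    calc F y ^ 2 * |p2| ≤ F y ^ 2 * (K * S ^ 2) :=
          mul_le_mul_of_nonneg_left hp2 (sq_nonneg _)
      _ = K / 2 * F y ^ 2 * S * (2 * S) := by ring
  have e0 : |g2W γ F y| ≤ |2 * F y * u2 * S| + |F y ^ 2 * (p2 / (2 * S))| := by
    unfold g2W
    exact abs_add_le _ _
  have final : (F y ^ 2 + u2 ^ 2) * S + K / 2 * F y ^ 2 * S ≤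
      (1 + K) * ((u1 ^ 2 + u2 ^ 2 + F y ^ 2) * S) := by
    nlinarith [mul_le_mul_of_nonneg_right
      (by nlinarith [sq_nonneg u1, sq_nonneg u2, sq_nonneg (F y), hK,
        mul_nonneg hK.le (sq_nonneg u1), mul_nonneg hK.le (sq_nonneg u2),
        mul_nonneg hK.le (sq_nonneg (F y))] :
        F y ^ 2 + u2 ^ 2 + K / 2 * F y ^ 2 ≤ (1 + K) * (u1 ^ 2 + u2 ^ 2 + F y ^ 2)) hS.le]
  linarith [e0, e1, e2, final]

set_option maxHeartbeats 1000000 in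
lemma aux_sup (hK : 0 < K) (hγ2 : ContDiff ℝ 2 γ) (hγpos : ∀ y, 0 < γ y)
    (hgrad : ∀ y, Real.sqrt ((pdr1 γ y) ^ 2 + (pdr2 γ y) ^ 2) ≤ K * γ y)
    (hq12 : ∀ y, |pdr1 (pdr2 γ) y| ≤ K * γ y)
    (hF : ContDiff ℝ 3 F)
    (hcombo : Integrable (fun y => ((pdr1 F y) ^ 2 + (pdr2 F y) ^ 2 + F y ^ 2) *
      Real.sqrt (γ y)) volume)
    (hFsq : Integrable (fun y => F y ^ 2) volume)
    (hmix : Integrable (fun y => (pdr1 (pdr2 F) y) ^ 2 * γ y) volume) :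
    Integrable (BW K γ F) volume ∧
      ∀ y₀ : ℝ × ℝ, F y₀ ^ 2 * Real.sqrt (γ y₀) ≤ ∫ z : ℝ × ℝ, BW K γ F z := by
  -- continuity of the pieces
  have cF : Continuous F := hF.continuous
  have cγ : Continuous γ := hγ2.continuous
  have cs : Continuous (fun y : ℝ × ℝ => Real.sqrt (γ y)) := Real.continuous_sqrt.comp cγ
  have hsne : ∀ y : ℝ × ℝ, Real.sqrt (γ y) ≠ 0 :=
    fun y => ne_of_gt (Real.sqrt_pos.mpr (hγpos y))
  have cu1 : Continuous (pdr1 F) := (contDiff_pdr1_two hF).continuous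
  have cu2 : Continuous (pdr2 F) := (contDiff_pdr2_two hF).continuous
  have cv : Continuous (pdr1 (pdr2 F)) := continuous_pdr1_pdr2 (hF.of_le (by norm_num))
  have cp1 : Continuous (pdr1 γ) := (contDiff_pdr1 hγ2).continuous
  have cp2 : Continuous (pdr2 γ) := (contDiff_pdr2 hγ2).continuous
  have cq : Continuous (pdr1 (pdr2 γ)) := continuous_pdr1_pdr2 hγ2
  have cg : Continuous (fun y : ℝ × ℝ => F y ^ 2 * Real.sqrt (γ y)) := (cF.pow 2).mul cs
  have cg2 : Continuous (g2W γ F) := by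
    unfold g2W
    exact (((continuous_const.mul cF).mul cu2).mul cs).add
      ((cF.pow 2).mul (cp2.div (continuous_const.mul cs)
        (fun y => by simpa using hsne y)))
  have cg12 : Continuous (g12W γ F) := by
    unfold g12W
    refine (Continuous.add (Continuous.add ?_ ?_) ?_).sub ?_
    · exact (((continuous_const.mul cu1).mul cu2).add
        ((continuous_const.mul cF).mul cv)).mul cs
    · exact (((cF.mul cu2).mul cp1).add ((cF.mul cu1).mul cp2)).div cs hsne
    · exact ((cF.pow 2).mul cq).div (continuous_const.mul cs)
        (fun y => by simpa using hsne y)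
    · exact (((cF.pow 2).mul cp1).mul cp2).div (continuous_const.mul (cs.pow 3))
        (fun y => by simpa [pow_eq_zero_iff] using hsne y)
  have cB : Continuous (BW K γ F) := by
    unfold BW
    exact ((continuous_const.mul cF.abs).mul (cv.abs.mul cs)).add
      (continuous_const.mul (((cu1.pow 2).add (cu2.pow 2) |>.add (cF.pow 2)).mul cs))
  -- integrability
  have hcombo_nonneg : ∀ y : ℝ × ℝ,
      0 ≤ ((pdr1 F y) ^ 2 + (pdr2 F y) ^ 2 + F y ^ 2) * Real.sqrt (γ y) :=
    fun y => mul_nonneg (by positivity) (Real.sqrt_nonneg _)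
  have hgint : Integrable (fun y : ℝ × ℝ => F y ^ 2 * Real.sqrt (γ y)) volume := by
    refine hcombo.mono' cg.aestronglyMeasurable (Filter.Eventually.of_forall fun y => ?_)
    rw [Real.norm_eq_abs, abs_of_nonneg (by positivity)]
    have : 0 ≤ ((pdr1 F y) ^ 2 + (pdr2 F y) ^ 2) * Real.sqrt (γ y) :=
      mul_nonneg (by positivity) (Real.sqrt_nonneg _)
    nlinarith [this]
  have hg2int : Integrable (g2W γ F) volume := by
    refine (hcombo.const_mul (1 + K)).mono' cg2.aestronglyMeasurable
      (Filter.Eventually.of_forall fun y => ?_)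
    rw [Real.norm_eq_abs]
    exact g2W_abs_le hK hγpos hgrad y
  have hBint : Integrable (BW K γ F) volume := by
    refine ((hFsq.add hmix).add (hcombo.const_mul (1 + 2 * K + K ^ 2))).mono'
      cB.aestronglyMeasurable (Filter.Eventually.of_forall fun y => ?_)
    rw [Real.norm_eq_abs]
    have hS : 0 ≤ Real.sqrt (γ y) := Real.sqrt_nonneg _
    have hSγ : Real.sqrt (γ y) ^ 2 = γ y := Real.sq_sqrt (hγpos y).le
    have h1 : 2 * |F y| * (|pdr1 (pdr2 F) y| * Real.sqrt (γ y)) ≤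
        F y ^ 2 + (pdr1 (pdr2 F) y) ^ 2 * γ y := by
      nlinarith [sq_nonneg (|F y| - |pdr1 (pdr2 F) y| * Real.sqrt (γ y)),
        sq_abs (F y), sq_abs (pdr1 (pdr2 F) y), abs_nonneg (F y),
        abs_nonneg (pdr1 (pdr2 F) y)]
    have hB0 : 0 ≤ BW K γ F y := by
      unfold BW
      have : 0 ≤ (1 + 2 * K + K ^ 2) := by positivity
      positivity
    rw [abs_of_nonneg hB0]
    unfold BW
    simp only [Pi.add_apply]
    linarith [h1]
  have hg12int : Integrable (g12W γ F) volume := by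
    refine hBint.mono' cg12.aestronglyMeasurable
      (Filter.Eventually.of_forall fun y => ?_)
    rw [Real.norm_eq_abs]
    exact g12W_abs_le hK hγpos hgrad hq12 y
  refine ⟨hBint, ?_⟩
  have key := sup_le_integral_mixed cg
    (fun y => mul_nonneg (sq_nonneg _) (Real.sqrt_nonneg _))
    (hd2W hγ2 hγpos hF) (hd12W hγ2 hγpos hF) hgint hg2int hg12int
  intro y₀
  refine (key y₀).trans ?_
  refine integral_mono hg12int.abs hBint (fun z => ?_)
  exact g12W_abs_le hK hγpos hgrad hq12 z

lemma integrable_of_lintegral_ne_top {h : ℝ × ℝ → ℝ} (hc : Continuous h)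
    (h0 : ∀ y, 0 ≤ h y) (hfin : (∫⁻ y, ENNReal.ofReal (h y)) ≠ ⊤) :
    Integrable h volume := by
  refine ⟨hc.aestronglyMeasurable, ?_⟩
  rw [hasFiniteIntegral_iff_ofReal (Filter.Eventually.of_forall h0)]
  exact lt_top_iff_ne_top.mpr hfin

lemma ofReal_sq_eq {x : ℝ} (hx : 0 ≤ x) :
    ENNReal.ofReal x ^ (2 : ℝ) = ENNReal.ofReal (x ^ 2) := by
  rw [ENNReal.ofReal_rpow_of_nonneg hx (by norm_num)]
  norm_num

/-- weighted 2D `L^∞` estimate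
`sup f²√γ ≤ C (‖f‖_{L²} (∫ |∂²f/∂y₁∂y₂|² γ)^{1/2} + ∫ (|∇f|² + f²) √γ)`. -/
theorem stmt16 (K : ℝ) (hK : 0 < K) :
    ∃ C : ℝ, 0 < C ∧ ∀ γ : ℝ × ℝ → ℝ, IsGoodWeight K γ →
      ∀ f : SchwartzMap (ℝ × ℝ) ℝ,
        (⨆ y : ℝ × ℝ, ENNReal.ofReal (f y ^ 2 * Real.sqrt (γ y)))
          ≤ ENNReal.ofReal C *
              (eLpNorm (⇑f) 2 volume *
                  (∫⁻ y : ℝ × ℝ,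
                      ENNReal.ofReal ((pdr2 (pdr1 ⇑f) y) ^ 2 * γ y)) ^ ((1:ℝ)/2) +
                ∫⁻ y : ℝ × ℝ,
                  ENNReal.ofReal
                    (((pdr1 ⇑f y) ^ 2 + (pdr2 ⇑f y) ^ 2 + f y ^ 2) *
                      Real.sqrt (γ y))) := by
  refine ⟨2 + 2 * K + K ^ 2, by positivity, fun γ hγ f => ?_⟩
  obtain ⟨hγ2, hγpos, hgrad, _, hq12, _, _⟩ := hγ
  have hCpos : (0:ℝ) < 2 + 2 * K + K ^ 2 := by positivity
  have hCne : ENNReal.ofReal (2 + 2 * K + K ^ 2) ≠ 0 := by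
    simp only [ne_eq, ENNReal.ofReal_eq_zero, not_le]
    exact hCpos
  set X := eLpNorm (⇑f) 2 volume with hX_def
  set I := ∫⁻ y : ℝ × ℝ, ENNReal.ofReal ((pdr2 (pdr1 ⇑f) y) ^ 2 * γ y) with hI_def
  set Y := ∫⁻ y : ℝ × ℝ, ENNReal.ofReal
    (((pdr1 ⇑f y) ^ 2 + (pdr2 ⇑f y) ^ 2 + f y ^ 2) * Real.sqrt (γ y)) with hY_def
  by_cases hY : Y = ⊤
  · rw [hY, add_top, ENNReal.mul_top hCne]
    exact le_top
  have hF3 : ContDiff ℝ 3 ⇑f := f.smooth 3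
  have hswap : ∀ y, pdr1 (pdr2 ⇑f) y = pdr2 (pdr1 ⇑f) y :=
    pdr_swap' (hF3.of_le (by norm_num))
  have cF : Continuous ⇑f := f.continuous
  have cγ : Continuous γ := hγ2.continuous
  have cs : Continuous (fun y : ℝ × ℝ => Real.sqrt (γ y)) := Real.continuous_sqrt.comp cγ
  have cu1 : Continuous (pdr1 ⇑f) := (contDiff_pdr1_two hF3).continuous
  have cu2 : Continuous (pdr2 ⇑f) := (contDiff_pdr2_two hF3).continuous
  have cv : Continuous (pdr1 (pdr2 ⇑f)) := continuous_pdr1_pdr2 (hF3.of_le (by norm_num))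
  by_cases hf0 : ∀ y : ℝ × ℝ, f y = 0
  · refine le_trans ?_ zero_le
    refine iSup_le fun y => ?_
    rw [hf0 y]
    simp
  -- f is not identically zero, so its L² norm is positive
  have hXne : X ≠ 0 := by
    intro hX0
    rw [hX_def, eLpNorm_eq_zero_iff cF.aestronglyMeasurable (by norm_num)] at hX0
    have heq : ⇑f = (0 : ℝ × ℝ → ℝ) :=
      MeasureTheory.Measure.eq_of_ae_eq hX0 cF continuous_const
    exact hf0 (fun y => by rw [heq]; rfl)
  by_cases hI : I = ⊤
  · rw [hI, ENNReal.top_rpow_of_pos (by norm_num), ENNReal.mul_top hXne,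
      top_add, ENNReal.mul_top hCne]
    exact le_top
  -- both integrals finite: the analytic core applies
  have hcombo : Integrable (fun y : ℝ × ℝ =>
      ((pdr1 ⇑f y) ^ 2 + (pdr2 ⇑f y) ^ 2 + f y ^ 2) * Real.sqrt (γ y)) volume := by
    refine integrable_of_lintegral_ne_top
      ((((cu1.pow 2).add (cu2.pow 2)).add (cF.pow 2)).mul cs)
      (fun y => mul_nonneg (by positivity) (Real.sqrt_nonneg _)) hY
  have hmix : Integrable (fun y : ℝ × ℝ => (pdr1 (pdr2 ⇑f) y) ^ 2 * γ y) volume := by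
    refine integrable_of_lintegral_ne_top ((cv.pow 2).mul cγ)
      (fun y => mul_nonneg (sq_nonneg _) (hγpos y).le) ?_
    have heq : (∫⁻ y : ℝ × ℝ, ENNReal.ofReal ((pdr1 (pdr2 ⇑f) y) ^ 2 * γ y)) = I := by
      rw [hI_def]
      exact lintegral_congr fun y => by rw [hswap y]
    rw [heq]; exact hI
  have hFsq : Integrable (fun y : ℝ × ℝ => f y ^ 2) volume := by
    have h1 : Integrable (⇑f) volume := f.integrable
    have hb : ∀ᵐ y : ℝ × ℝ ∂volume, ‖f y‖ ≤ (SchwartzMap.seminorm ℝ 0 0) f :=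
      Filter.Eventually.of_forall fun y => f.norm_le_seminorm ℝ y
    have h2 := h1.bdd_mul cF.aestronglyMeasurable hb
    simpa [pow_two] using h2
  obtain ⟨hBint, hsup⟩ := aux_sup hK hγ2 hγpos hgrad hq12 hF3 hcombo hFsq hmix
  have hA0 : (0:ℝ) ≤ 1 + 2 * K + K ^ 2 := by nlinarith [sq_nonneg (1 + K)]
  have hBnonneg : ∀ z : ℝ × ℝ, 0 ≤ BW K γ (⇑f) z := by
    intro z
    unfold BW
    refine add_nonneg (mul_nonneg (by positivity)
      (mul_nonneg (abs_nonneg _) (Real.sqrt_nonneg _)))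
      (mul_nonneg hA0 (mul_nonneg (by positivity) (Real.sqrt_nonneg _)))
  have step1 : (⨆ y : ℝ × ℝ, ENNReal.ofReal (f y ^ 2 * Real.sqrt (γ y))) ≤
      ENNReal.ofReal (∫ z : ℝ × ℝ, BW K γ (⇑f) z) :=
    iSup_le fun y => ENNReal.ofReal_le_ofReal (hsup y)
  have step2 : ENNReal.ofReal (∫ z : ℝ × ℝ, BW K γ (⇑f) z) =
      ∫⁻ z : ℝ × ℝ, ENNReal.ofReal (BW K γ (⇑f) z) :=
    ofReal_integral_eq_lintegral_ofReal hBint (Filter.Eventually.of_forall hBnonneg)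
  have cv2 : Continuous (pdr2 (pdr1 ⇑f)) := by
    have : pdr1 (pdr2 ⇑f) = pdr2 (pdr1 ⇑f) := funext hswap
    rw [← this]; exact cv
  have mφ : Measurable (fun z : ℝ × ℝ =>
      ENNReal.ofReal (|f z| * (|pdr2 (pdr1 ⇑f) z| * Real.sqrt (γ z)))) :=
    (cF.abs.mul (cv2.abs.mul cs)).measurable.ennreal_ofReal
  have step3 : (∫⁻ z : ℝ × ℝ, ENNReal.ofReal (BW K γ (⇑f) z)) ≤
      2 * (∫⁻ z : ℝ × ℝ,
        ENNReal.ofReal (|f z| * (|pdr2 (pdr1 ⇑f) z| * Real.sqrt (γ z)))) +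
      ENNReal.ofReal (1 + 2 * K + K ^ 2) * Y := by
    have hpt : ∀ z : ℝ × ℝ, ENNReal.ofReal (BW K γ (⇑f) z) ≤
        2 * ENNReal.ofReal (|f z| * (|pdr2 (pdr1 ⇑f) z| * Real.sqrt (γ z))) +
        ENNReal.ofReal (1 + 2 * K + K ^ 2) *
          ENNReal.ofReal (((pdr1 ⇑f z) ^ 2 + (pdr2 ⇑f z) ^ 2 + f z ^ 2) *
            Real.sqrt (γ z)) := by
      intro z
      unfold BW
      rw [hswap z]
      refine le_trans ENNReal.ofReal_add_le (add_le_add ?_ ?_)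
      · rw [mul_assoc, ENNReal.ofReal_mul (by norm_num : (0:ℝ) ≤ 2),
          show ENNReal.ofReal (2:ℝ) = 2 by simp]
      · rw [ENNReal.ofReal_mul hA0]
    calc (∫⁻ z : ℝ × ℝ, ENNReal.ofReal (BW K γ (⇑f) z)) ≤
        ∫⁻ z : ℝ × ℝ, (2 * ENNReal.ofReal (|f z| * (|pdr2 (pdr1 ⇑f) z| * Real.sqrt (γ z))) +
          ENNReal.ofReal (1 + 2 * K + K ^ 2) *
            ENNReal.ofReal (((pdr1 ⇑f z) ^ 2 + (pdr2 ⇑f z) ^ 2 + f z ^ 2) *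
              Real.sqrt (γ z))) := lintegral_mono hpt
      _ = _ := by
        rw [lintegral_add_left (mφ.const_mul 2), lintegral_const_mul 2 mφ,
          lintegral_const_mul _ (f := fun z : ℝ × ℝ => ENNReal.ofReal
            (((pdr1 ⇑f z) ^ 2 + (pdr2 ⇑f z) ^ 2 + f z ^ 2) * Real.sqrt (γ z)))
            ((((cu1.pow 2).add (cu2.pow 2)).add (cF.pow 2)).mul cs).measurable.ennreal_ofReal]
  have step4 : (∫⁻ z : ℝ × ℝ,
      ENNReal.ofReal (|f z| * (|pdr2 (pdr1 ⇑f) z| * Real.sqrt (γ z)))) ≤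
      X * I ^ ((1:ℝ)/2) := by
    have hsplit : (∫⁻ z : ℝ × ℝ,
        ENNReal.ofReal (|f z| * (|pdr2 (pdr1 ⇑f) z| * Real.sqrt (γ z)))) =
        ∫⁻ z : ℝ × ℝ, ((fun z : ℝ × ℝ => ENNReal.ofReal (|f z|)) *
          (fun z : ℝ × ℝ => ENNReal.ofReal (|pdr2 (pdr1 ⇑f) z| * Real.sqrt (γ z)))) z :=
      lintegral_congr fun z => ENNReal.ofReal_mul (abs_nonneg _)
    rw [hsplit]
    have hpq : Real.HolderConjugate 2 2 := Real.HolderConjugate.two_two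
    have hH := ENNReal.lintegral_mul_le_Lp_mul_Lq volume hpq
      (cF.abs.measurable.ennreal_ofReal).aemeasurable
      ((cv2.abs.mul cs).measurable.ennreal_ofReal).aemeasurable
    refine hH.trans ?_
    have hXeq : (∫⁻ z : ℝ × ℝ, ENNReal.ofReal (|f z|) ^ (2:ℝ)) ^ ((1:ℝ)/2) = X := by
      have hz : ∀ z : ℝ × ℝ, ENNReal.ofReal (|f z|) ^ (2:ℝ) =
          ‖f z‖ₑ ^ (2:ℝ) := fun z => by rw [Real.enorm_eq_ofReal_abs]
      rw [lintegral_congr hz, hX_def,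
        eLpNorm_eq_lintegral_rpow_enorm_toReal (by norm_num) (by norm_num)]
      norm_num
    have hIeq : (∫⁻ z : ℝ × ℝ,
        ENNReal.ofReal (|pdr2 (pdr1 ⇑f) z| * Real.sqrt (γ z)) ^ (2:ℝ)) ^ ((1:ℝ)/2) =
        I ^ ((1:ℝ)/2) := by
      have hz : ∀ z : ℝ × ℝ,
          ENNReal.ofReal (|pdr2 (pdr1 ⇑f) z| * Real.sqrt (γ z)) ^ (2:ℝ) =
          ENNReal.ofReal ((pdr2 (pdr1 ⇑f) z) ^ 2 * γ z) := by
        intro z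
        rw [ofReal_sq_eq (mul_nonneg (abs_nonneg _) (Real.sqrt_nonneg _))]
        congr 1
        rw [mul_pow, sq_abs, Real.sq_sqrt (hγpos z).le]
      rw [lintegral_congr hz, hI_def]
    calc _ = (∫⁻ z : ℝ × ℝ, ENNReal.ofReal (|f z|) ^ (2:ℝ)) ^ ((1:ℝ)/2) *
          (∫⁻ z : ℝ × ℝ,
            ENNReal.ofReal (|pdr2 (pdr1 ⇑f) z| * Real.sqrt (γ z)) ^ (2:ℝ)) ^ ((1:ℝ)/2) := rfl
      _ = X * I ^ ((1:ℝ)/2) := by rw [hXeq, hIeq]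
      _ ≤ X * I ^ ((1:ℝ)/2) := le_rfl
  calc (⨆ y : ℝ × ℝ, ENNReal.ofReal (f y ^ 2 * Real.sqrt (γ y)))
      ≤ ENNReal.ofReal (∫ z : ℝ × ℝ, BW K γ (⇑f) z) := step1
    _ = ∫⁻ z : ℝ × ℝ, ENNReal.ofReal (BW K γ (⇑f) z) := step2
    _ ≤ 2 * (∫⁻ z : ℝ × ℝ,
          ENNReal.ofReal (|f z| * (|pdr2 (pdr1 ⇑f) z| * Real.sqrt (γ z)))) +
        ENNReal.ofReal (1 + 2 * K + K ^ 2) * Y := step3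
    _ ≤ 2 * (X * I ^ ((1:ℝ)/2)) + ENNReal.ofReal (1 + 2 * K + K ^ 2) * Y := by
        exact add_le_add_left (mul_le_mul_right step4 2) _
    _ ≤ ENNReal.ofReal (2 + 2 * K + K ^ 2) * (X * I ^ ((1:ℝ)/2)) +
        ENNReal.ofReal (2 + 2 * K + K ^ 2) * Y := by
        refine add_le_add (mul_le_mul_left ?_ _) (mul_le_mul_left ?_ _)
        · calc (2:ℝ≥0∞) = ENNReal.ofReal 2 := by simp
            _ ≤ ENNReal.ofReal (2 + 2 * K + K ^ 2) :=
              ENNReal.ofReal_le_ofReal (by nlinarith)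
        · exact ENNReal.ofReal_le_ofReal (by nlinarith)
    _ = ENNReal.ofReal (2 + 2 * K + K ^ 2) * (X * I ^ ((1:ℝ)/2) + Y) :=
        (mul_add _ _ _).symm
end Aux
end
end
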